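/- arXiv:2408.08507 — 13 statements merged into one kernel-verified Lean document; each statement's English description precedes it below -/
import Mathlib

section
/- For any basis B = (b_1; ...; b_k) ∈ F_q^{k×n} of an [n,k]_q linear code C, the size of the support of C equals the sum of the Hamming weights of the epipodal vectors: |Supp(C)| = Σ_{i=1}^k |b_i^+|. -/
open Classical in
/-- The `i`-th epipodal vector of `B`: the projection of row `i` orthogonal to
the supports of the previous rows. -/
noncomputable def epipodal {F : Type} [Field F] {k n : ℕ}
    (B : Fin k → Fin n → F) (i : Fin k) : Fin n → F :=
  fun j => if ∃ m, m < i ∧ B m j ≠ 0 then 0 else B i j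

/-- The support of a code: the coordinates at which some codeword is nonzero. -/
def codeSupp {F : Type} [Field F] {n : ℕ} (C : Submodule F (Fin n → F)) : Set (Fin n) :=
  {j | ∃ c ∈ C, c j ≠ 0}

/-- The size of the support of a code equals the sum of the Hamming weights of
the epipodal vectors of any basis of the code. -/
theorem codeSupp_card_eq_sum_epipodal {F : Type} [Field F] [Fintype F] [DecidableEq F]
    {n k : ℕ} (B : Fin k → Fin n → F) (hB : LinearIndependent F B)
    (C : Submodule F (Fin n → F)) (hC : C = Submodule.span F (Set.range B)) :
    (codeSupp C).ncard = ∑ i, hammingNorm (epipodal B i) := by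
  classical
  -- epipodal nonzero implies B nonzero
  have hepB : ∀ (i : Fin k) (j : Fin n), epipodal B i j ≠ 0 → B i j ≠ 0 := by
    intro i j h
    unfold epipodal at h
    by_cases hex : ∃ m, m < i ∧ B m j ≠ 0
    · simp [hex] at h
    · simpa [hex] using h
  let T : Fin k → Finset (Fin n) := fun i => {j | epipodal B i j ≠ 0}
  -- The support equals the union of the epipodal supports
  have hsupp : codeSupp C = ↑(Finset.univ.biUnion T) := by
    ext j
    simp only [codeSupp, Set.mem_setOf_eq, Finset.mem_coe,
      Finset.mem_biUnion, Finset.mem_univ, true_and, T, Finset.mem_filter]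
    constructor
    · rintro ⟨c, hc, hcj⟩
      -- first show ∃ i, B i j ≠ 0
      have hBi : ∃ i, B i j ≠ 0 := by
        by_contra h
        push_neg at h
        have hle : C ≤ LinearMap.ker (LinearMap.proj j : (Fin n → F) →ₗ[F] F) := by
          rw [hC, Submodule.span_le]
          rintro _ ⟨i, rfl⟩
          simp [LinearMap.mem_ker, h i]
        exact hcj (hle hc)
      -- take the minimal such i
      obtain ⟨i0, hi0⟩ := hBi
      set s : Finset (Fin k) := {i | B i j ≠ 0} with hs
      have hsne : s.Nonempty := ⟨i0, by simp [hs, hi0]⟩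
      refine ⟨s.min' hsne, ?_⟩
      have hmem : B (s.min' hsne) j ≠ 0 := by
        have := s.min'_mem hsne
        simpa [hs] using this
      have hnone : ¬ ∃ m, m < s.min' hsne ∧ B m j ≠ 0 := by
        rintro ⟨m, hm, hmne⟩
        have : s.min' hsne ≤ m := s.min'_le m (by simp [hs, hmne])
        exact absurd hm (not_lt.mpr this)
      show epipodal B (s.min' hsne) j ≠ 0
      unfold epipodal
      rw [if_neg hnone]
      exact hmem
    · rintro ⟨i, hi⟩
      exact ⟨B i, by rw [hC]; exact Submodule.subset_span ⟨i, rfl⟩, hepB i j hi⟩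
  -- disjointness of the epipodal supports
  have hdisj : ∀ i ∈ Finset.univ, ∀ i' ∈ Finset.univ, i ≠ i' → Disjoint (T i) (T i') := by
    have key : ∀ (i i' : Fin k), i < i' → Disjoint (T i) (T i') := by
      intro i i' hlt
      refine Finset.disjoint_left.mpr ?_
      intro j hj hj'
      have h1 : B i j ≠ 0 := hepB i j (by simpa [T] using hj)
      have h2 : epipodal B i' j ≠ 0 := by simpa [T] using hj'
      have : epipodal B i' j = 0 := by
        unfold epipodal
        simp [show ∃ m, m < i' ∧ B m j ≠ 0 from ⟨i, hlt, h1⟩]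
      exact h2 this
    intro i _ i' _ hne
    rcases lt_or_gt_of_ne hne with h | h
    · exact key i i' h
    · exact (key i' i h).symm
  rw [hsupp, Set.ncard_coe_finset, Finset.card_biUnion hdisj]
  exact Finset.sum_congr rfl fun i _ => by simp [hammingNorm, T]
end

section
/- Any code C ⊆ F_q^n of dimension k ≥ 1 has a subcode C' of dimension k−1 whose support is a strict subset of the support of C. -/
/-- Any code of dimension `k ≥ 1` has a subcode of dimension `k − 1` with
strictly smaller support. -/
theorem exists_subcode_smaller_support {F : Type} [Field F] [Fintype F] {n k : ℕ}
    (hk : 1 ≤ k) (C : Submodule F (Fin n → F)) (hC : Module.finrank F C = k) :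
    ∃ C' : Submodule F (Fin n → F), C' ≤ C ∧ Module.finrank F C' = k - 1 ∧
      codeSupp C' ⊂ codeSupp C := by
  -- C is nontrivial, so its support is nonempty
  have hCbot : C ≠ ⊥ := by
    intro h
    rw [h, finrank_bot] at hC
    omega
  obtain ⟨c, hcC, hcne⟩ := Submodule.exists_mem_ne_zero_of_ne_bot hCbot
  obtain ⟨j, hcj⟩ : ∃ j, c j ≠ 0 := by
    by_contra h
    push_neg at h
    exact hcne (funext h)
  -- the evaluation map at coordinate j
  let f : C →ₗ[F] F := (LinearMap.proj j).comp C.subtype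
  have hfc : f ⟨c, hcC⟩ = c j := rfl
  have hsurj : Function.Surjective f := by
    intro a
    refine ⟨(a * (c j)⁻¹) • ⟨c, hcC⟩, ?_⟩
    show (a * (c j)⁻¹) * c j = a
    field_simp
  have hrange : LinearMap.range f = ⊤ := LinearMap.range_eq_top.mpr hsurj
  have hranks := LinearMap.finrank_range_add_finrank_ker f
  rw [hrange, finrank_top, Module.finrank_self, hC] at hranks
  refine ⟨(LinearMap.ker f).map C.subtype, Submodule.map_subtype_le _ _, ?_, ?_⟩
  · rw [Submodule.finrank_map_subtype_eq]
    omega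
  · constructor
    · rintro i ⟨x, ⟨⟨y, hyker, rfl⟩, hxi⟩⟩
      exact ⟨y, y.2, hxi⟩
    · intro hsub
      have hj : j ∈ codeSupp C := ⟨c, hcC, hcj⟩
      obtain ⟨x, ⟨y, hyker, rfl⟩, hxj⟩ := hsub hj
      exact hxj (by simpa [f] using hyker)
end

section
/- A nonzero subcode C' ⊆ C ⊆ F_q^n is a primitive subcode of C if and only if there exists a set S ⊆ [n] of coordinates such that C' = {c ∈ C : c_i = 0 for all i ∈ S}. -/
/-- A nonzero subcode `C' ⊆ C` is primitive in `C` if there is no subcode of `C` of the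
same dimension as `C'` whose support is a strict subset of the support of `C'`. -/
def IsPrimitiveSubcode {F : Type} [Field F] {n : ℕ}
    (C C' : Submodule F (Fin n → F)) : Prop :=
  ¬∃ C'' : Submodule F (Fin n → F), C'' ≤ C ∧
    Module.finrank F C'' = Module.finrank F C' ∧ codeSupp C'' ⊂ codeSupp C'

lemma codeSupp_mono {F : Type} [Field F] {n : ℕ} {A B : Submodule F (Fin n → F)}
    (h : A ≤ B) : codeSupp A ⊆ codeSupp B := by
  rintro i ⟨x, hx, hxi⟩
  exact ⟨x, h hx, hxi⟩

/-- A nonzero subcode `C' ⊆ C` is primitive in `C` iff it is the set of codewords of `C`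
vanishing on some set `S` of coordinates. -/
theorem primitiveSubcode_iff {F : Type} [Field F] [Fintype F] {n : ℕ}
    (C C' : Submodule F (Fin n → F)) (hle : C' ≤ C) (hne : C' ≠ ⊥) :
    IsPrimitiveSubcode C C' ↔
      ∃ S : Set (Fin n), ∀ c : Fin n → F, c ∈ C' ↔ (c ∈ C ∧ ∀ i ∈ S, c i = 0) := by
  constructor
  · intro hprim
    refine ⟨(codeSupp C')ᶜ, fun c => ⟨fun hc => ⟨hle hc, fun i hi => ?_⟩, fun ⟨hcC, hS⟩ => ?_⟩⟩
    · by_contra h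
      exact hi ⟨c, hc, h⟩
    · by_contra hc
      have hc0 : c ≠ 0 := fun h => hc (h ▸ C'.zero_mem)
      obtain ⟨j, hj⟩ : ∃ j, c j ≠ 0 := by
        by_contra h
        push_neg at h
        exact hc0 (funext h)
      set D : Submodule F (Fin n → F) := C' ⊔ (F ∙ c) with hD
      have hcD : c ∈ D := Submodule.mem_sup_right (Submodule.mem_span_singleton_self c)
      have hDC : D ≤ C := sup_le hle ((Submodule.span_singleton_le_iff_mem c C).mpr hcC)
      -- evaluation at j on D
      set f : D →ₗ[F] F := (LinearMap.proj j).comp D.subtype with hf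
      set C'' : Submodule F (Fin n → F) := (LinearMap.ker f).map D.subtype with hC''
      have hmem : ∀ x, x ∈ C'' ↔ x ∈ D ∧ x j = 0 := by
        intro x
        constructor
        · rintro ⟨y, hy, rfl⟩
          exact ⟨y.2, hy⟩
        · rintro ⟨hxD, hxj⟩
          exact ⟨⟨x, hxD⟩, hxj, rfl⟩
      -- rank computations
      have hrange : LinearMap.range f = ⊤ := by
        rw [LinearMap.range_eq_top]
        intro a
        refine ⟨(a * (c j)⁻¹) • ⟨c, hcD⟩, ?_⟩
        show ((a * (c j)⁻¹) • c) j = a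
        simp [mul_assoc, inv_mul_cancel₀ hj]
      have h1 : Module.finrank F (LinearMap.range f) + Module.finrank F (LinearMap.ker f)
          = Module.finrank F D := LinearMap.finrank_range_add_finrank_ker f
      rw [hrange, finrank_top, Module.finrank_self] at h1
      have hinf : C' ⊓ (F ∙ c) = ⊥ := by
        rw [Submodule.eq_bot_iff]
        rintro x ⟨hx1, hx2⟩
        obtain ⟨s, rfl⟩ := Submodule.mem_span_singleton.mp hx2
        rcases eq_or_ne s 0 with rfl | hs
        · simp
        · exact absurd (by simpa [smul_smul, inv_mul_cancel₀ hs] using C'.smul_mem s⁻¹ hx1) hc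
      have hsum := Submodule.finrank_sup_add_finrank_inf_eq C' (F ∙ c)
      rw [hinf, finrank_bot, finrank_span_singleton hc0] at hsum
      have hrank : Module.finrank F C'' = Module.finrank F C' := by
        have hmapeq : Module.finrank F C'' = Module.finrank F (LinearMap.ker f) :=
          Submodule.finrank_map_subtype_eq D (LinearMap.ker f)
        rw [← hD] at hsum
        omega
      -- support facts
      have hsuppD : codeSupp D ⊆ codeSupp C' := by
        rintro i ⟨x, hxD, hxi⟩
        obtain ⟨a, haC', b, hb, rfl⟩ := Submodule.mem_sup.mp hxD
        obtain ⟨s, rfl⟩ := Submodule.mem_span_singleton.mp hb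
        by_cases ha : a i = 0
        · have hci : c i ≠ 0 := by
            intro h
            apply hxi
            show a i + (s • c) i = 0
            simp [ha, h]
          by_contra hiS
          exact hci (hS i hiS)
        · exact ⟨a, haC', ha⟩
      have hC''D : C'' ≤ D := fun x hx => ((hmem x).mp hx).1
      have hjC' : j ∈ codeSupp C' := by
        by_contra hjS
        exact hj (hS j hjS)
      have hjC'' : j ∉ codeSupp C'' := by
        rintro ⟨x, hx, hxj⟩
        exact hxj ((hmem x).mp hx).2
      refine hprim ⟨C'', hC''D.trans hDC, hrank, ?_⟩
      exact ⟨(codeSupp_mono hC''D).trans hsuppD, fun h => hjC'' (h hjC')⟩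
  · rintro ⟨S, hS⟩ ⟨C'', hC''C, hrank, hssub⟩
    have hC''C' : C'' ≤ C' := by
      intro x hx
      refine (hS x).mpr ⟨hC''C hx, fun i hi => ?_⟩
      by_contra h
      have hiC' : i ∈ codeSupp C' := hssub.1 ⟨x, hx, h⟩
      obtain ⟨c', hc', hci⟩ := hiC'
      exact hci (((hS c').mp hc').2 i hi)
    have : C'' = C' := Submodule.eq_of_le_of_finrank_eq hC''C' hrank
    exact hssub.ne (by rw [this])
end

section
/- For a nonzero codeword c in a k-dimensional code C ⊆ F_q^n, c is primitive in C if and only if the projection π⊥_c(C) orthogonal to the support of c is a (k−1)-dimensional code. -/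
/-- Projection orthogonal to the support of `x`, as a linear map. -/
def projPerpL {F : Type} [Field F] [DecidableEq F] {n : ℕ} (x : Fin n → F) :
    (Fin n → F) →ₗ[F] (Fin n → F) where
  toFun y := fun i => if x i = 0 then y i else 0
  map_add' y z := by funext i; by_cases h : x i = 0 <;> simp [h]
  map_smul' c y := by funext i; by_cases h : x i = 0 <;> simp [h]

/-- A nonzero codeword `c ∈ C` is primitive in `C` if no nonzero codeword of `C` has
support strictly contained in the support of `c`. -/
def IsPrimitive {F : Type} [Field F] {n : ℕ} (C : Submodule F (Fin n → F))
    (c : Fin n → F) : Prop :=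
  c ∈ C ∧ c ≠ 0 ∧ ¬∃ c' ∈ C, c' ≠ 0 ∧ {j | c' j ≠ 0} ⊂ {j | c j ≠ 0}

/-- A nonzero codeword `c` of a `k`-dimensional code `C` is primitive iff the projection
of `C` orthogonal to the support of `c` is a `(k−1)`-dimensional code. -/
theorem primitive_iff_proj_rank {F : Type} [Field F] [Fintype F] [DecidableEq F]
    {n k : ℕ} (C : Submodule F (Fin n → F)) (hC : Module.finrank F C = k)
    (c : Fin n → F) (hc : c ∈ C) (hc0 : c ≠ 0) :
    IsPrimitive C c ↔ Module.finrank F (C.map (projPerpL c)) = k - 1 := by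
  classical
  set φ : C →ₗ[F] (Fin n → F) := (projPerpL c).comp C.subtype with hφ
  have hrange : LinearMap.range φ = C.map (projPerpL c) := by
    rw [hφ, LinearMap.range_comp, Submodule.range_subtype]
  have hrn : Module.finrank F (C.map (projPerpL c))
      + Module.finrank F (LinearMap.ker φ) = k := by
    rw [← hrange, LinearMap.finrank_range_add_finrank_ker, hC]
  -- kernel membership
  have hker_mem : ∀ y : C, y ∈ LinearMap.ker φ ↔
      ∀ i, c i = 0 → (y : Fin n → F) i = 0 := by
    intro y
    constructor
    · intro h i hi
      have := congrFun (LinearMap.mem_ker.mp h) i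
      simpa [hφ, projPerpL, hi] using this
    · intro h
      refine LinearMap.mem_ker.mpr ?_
      funext i
      by_cases hi : c i = 0 <;> simp [hφ, projPerpL, hi, h i]
  set cc : C := ⟨c, hc⟩ with hcc
  have hcc0 : cc ≠ 0 := by
    intro h; apply hc0; exact congrArg (Subtype.val) h
  have hcmem : cc ∈ LinearMap.ker φ := by
    rw [hker_mem]; intro i hi; exact hi
  have hspan_le : Submodule.span F {cc} ≤ LinearMap.ker φ := by
    rwa [Submodule.span_singleton_le_iff_mem]
  have hspan_rank : Module.finrank F (Submodule.span F {cc}) = 1 :=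
    finrank_span_singleton hcc0
  have hker_pos : 1 ≤ Module.finrank F (LinearMap.ker φ) := by
    have := Submodule.finrank_mono hspan_le
    omega
  obtain ⟨j, hj⟩ : ∃ j, c j ≠ 0 := Function.ne_iff.mp hc0
  constructor
  · rintro ⟨-, -, hprim⟩
    -- show kernel ≤ span {cc}
    have hker_le : LinearMap.ker φ ≤ Submodule.span F {cc} := by
      intro y hy
      have hsupp := (hker_mem y).mp hy
      set a : F := (y : Fin n → F) j / c j with ha
      have hz : (y : Fin n → F) - a • c = 0 := by
        by_contra hz0
        apply hprim
        refine ⟨(y : Fin n → F) - a • c, Submodule.sub_mem C y.2 (Submodule.smul_mem C a hc), hz0, ?_⟩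
        constructor
        · intro i hi
          simp only [Set.mem_setOf_eq] at hi ⊢
          intro hci
          apply hi
          simp [Pi.sub_apply, hci, hsupp i hci]
        · intro hle
          have := hle (show j ∈ {i | c i ≠ 0} from hj)
          simp only [Set.mem_setOf_eq, Pi.sub_apply, Pi.smul_apply, smul_eq_mul] at this
          apply this
          rw [ha, div_mul_cancel₀ _ hj, sub_self]
      have : (y : Fin n → F) = a • c := by
        have := sub_eq_zero.mp hz; exact this
      have : y = a • cc := by
        apply Subtype.ext; simpa [hcc] using this
      rw [this]
      exact Submodule.smul_mem _ _ (Submodule.mem_span_singleton_self cc)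
    have : Module.finrank F (LinearMap.ker φ) = 1 := by
      rw [le_antisymm hker_le hspan_le, hspan_rank]
    omega
  · intro hmap
    refine ⟨hc, hc0, ?_⟩
    rintro ⟨c', hc'C, hc'0, hlt⟩
    have hker1 : Module.finrank F (LinearMap.ker φ) = 1 := by omega
    have heq : Submodule.span F {cc} = LinearMap.ker φ := by
      apply Submodule.eq_of_le_of_finrank_le hspan_le
      rw [hspan_rank, hker1]
    have hc'ker : (⟨c', hc'C⟩ : C) ∈ LinearMap.ker φ := by
      rw [hker_mem]
      intro i hi
      by_contra hne
      exact (hlt.1 (show i ∈ {j | c' j ≠ 0} from hne) : c i ≠ 0) hi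
    rw [← heq, Submodule.mem_span_singleton] at hc'ker
    obtain ⟨a, ha⟩ := hc'ker
    have hac : a • c = c' := congrArg Subtype.val ha
    have ha0 : a ≠ 0 := by
      rintro rfl; apply hc'0; rw [← hac]; simp
    apply hlt.2
    intro i hi
    simp only [Set.mem_setOf_eq] at hi ⊢
    rw [← hac]
    simp [ha0, hi]
end

section
/- A basis B = (b_1; ...; b_k) of a code C ⊆ F_q^n is proper if and only if b_1 is a primitive codeword of C and the projected basis B_{[2,k]} = (π⊥_{b_1}(b_2); ...; π⊥_{b_1}(b_k)) is proper. -/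
/-- A basis is proper if all its epipodal vectors are nonzero. -/
def IsProper {F : Type} [Field F] {k n : ℕ} (B : Fin k → Fin n → F) : Prop :=
  ∀ i, epipodal B i ≠ 0

lemma epipodal_zero {F : Type} [Field F] {k n : ℕ} (B : Fin (k + 1) → Fin n → F) :
    epipodal B 0 = B 0 := by
  funext j
  simp only [epipodal]
  rw [if_neg]
  rintro ⟨m, hm, -⟩
  exact absurd hm (by simp)

lemma epipodal_tail {F : Type} [Field F] [DecidableEq F] {k n : ℕ}
    (B : Fin (k + 1) → Fin n → F) (i : Fin k) :
    epipodal (fun (i : Fin k) (j : Fin n) => if B 0 j = 0 then B i.succ j else 0) i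
      = epipodal B i.succ := by
  funext j
  simp only [epipodal]
  by_cases h0 : B 0 j = 0
  · by_cases hc : ∃ m : Fin k, m < i ∧ B m.succ j ≠ 0
    · obtain ⟨m, hm, hmne⟩ := hc
      rw [if_pos ⟨m, hm, by simpa [h0] using hmne⟩,
          if_pos ⟨m.succ, Fin.succ_lt_succ_iff.mpr hm, hmne⟩]
    · push_neg at hc
      rw [if_neg (show ¬∃ m : Fin k, m < i ∧
            (if B 0 j = 0 then B m.succ j else 0) ≠ 0 by
          rintro ⟨m, hm, hne⟩
          rw [if_pos h0] at hne
          exact hne (hc m hm)),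
        if_pos h0,
        if_neg (show ¬∃ m : Fin (k + 1), m < i.succ ∧ B m j ≠ 0 by
          rintro ⟨m, hm, hne⟩
          induction m using Fin.cases with
          | zero => exact hne h0
          | succ m' => exact hne (hc m' (Fin.succ_lt_succ_iff.mp hm)))]
  · rw [if_neg (show ¬∃ m : Fin k, m < i ∧
          (if B 0 j = 0 then B m.succ j else 0) ≠ 0 by
        rintro ⟨m, hm, hne⟩
        rw [if_neg h0] at hne
        exact hne rfl),
      if_neg h0,
      if_pos (show ∃ m : Fin (k + 1), m < i.succ ∧ B m j ≠ 0 from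
        ⟨0, Fin.succ_pos i, h0⟩)]

/-- A basis `B = (b_1; …; b_k)` of a code `C` is proper iff `b_1` is a primitive
codeword of `C` and the projected basis `B_{[2,k]}` is proper. -/
theorem proper_iff_primitive_head_and_proper_tail {F : Type} [Field F] [Fintype F]
    [DecidableEq F] {k n : ℕ} (B : Fin (k + 1) → Fin n → F)
    (hB : LinearIndependent F B) :
    IsProper B ↔
      (IsPrimitive (Submodule.span F (Set.range B)) (B 0) ∧
        IsProper (fun (i : Fin k) (j : Fin n) =>
          if B 0 j = 0 then B i.succ j else 0)) := by
  constructor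
  · intro hP
    refine ⟨⟨Submodule.subset_span ⟨0, rfl⟩, ?_, ?_⟩, ?_⟩
    · have h := hP 0
      rwa [epipodal_zero] at h
    · rintro ⟨c, hc, hc0, hsub⟩
      rw [Submodule.mem_span_range_iff_exists_fun] at hc
      obtain ⟨a, rfl⟩ := hc
      by_cases hA : ∀ i : Fin k, a i.succ = 0
      · have hc' : (∑ i, a i • B i) = a 0 • B 0 := by
          rw [Fin.sum_univ_succ]
          simp [hA]
        have ha0 : a 0 ≠ 0 := by
          intro h; apply hc0; rw [hc', h, zero_smul]
        have hkey : {j | (∑ i, a i • B i) j ≠ 0} = {j | B 0 j ≠ 0} := by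
          ext j
          rw [hc']
          simp [Pi.smul_apply, smul_eq_mul, mul_eq_zero, ha0]
        rw [hkey] at hsub
        exact ssubset_irrefl _ hsub
      · push_neg at hA
        set s : Finset (Fin k) := Finset.univ.filter (fun i => a i.succ ≠ 0) with hs
        have hsne : s.Nonempty := by
          obtain ⟨i, hi⟩ := hA
          exact ⟨i, by simp [hs, hi]⟩
        set i := s.max' hsne with hidef
        have hai : a i.succ ≠ 0 := by
          have := s.max'_mem hsne
          simpa [hs] using this
        have hmax : ∀ m : Fin k, i < m → a m.succ = 0 := by
          intro m hm
          by_contra hne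
          exact absurd (s.le_max' m (by simp [hs, hne])) (not_le.mpr hm)
        have h := hP i.succ
        rw [Function.ne_iff] at h
        obtain ⟨j, hj⟩ := h
        simp only [epipodal, Pi.zero_apply] at hj
        rcases Classical.em (∃ m, m < i.succ ∧ B m j ≠ 0) with hcond | hcond
        · rw [if_pos hcond] at hj; exact hj rfl
        · rw [if_neg hcond] at hj
          push_neg at hcond
          have hcj : (∑ m, a m • B m) j = a i.succ * B i.succ j := by
            rw [Finset.sum_apply]
            rw [Finset.sum_eq_single i.succ]
            · simp [smul_eq_mul]
            · intro m _ hne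
              rcases lt_or_gt_of_ne hne with hlt | hgt
              · simp [hcond m hlt]
              · have hm0 : m ≠ 0 := by
                  intro h0; rw [h0] at hgt
                  exact absurd hgt (by simp)
                obtain ⟨m', rfl⟩ := Fin.eq_succ_of_ne_zero hm0
                simp [hmax m' (Fin.succ_lt_succ_iff.mp hgt)]
            · intro h; exact absurd (Finset.mem_univ _) h
          have hjc : j ∈ {j | (∑ m, a m • B m) j ≠ 0} := by
            simp only [Set.mem_setOf_eq, hcj]
            exact mul_ne_zero hai hj
          have hmem := hsub.1 hjc
          simp only [Set.mem_setOf_eq] at hmem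
          exact hmem (hcond 0 (Fin.succ_pos i))
    · intro i
      rw [epipodal_tail]
      exact hP i.succ
  · rintro ⟨hprim, htail⟩ i
    induction i using Fin.cases with
    | zero => rw [epipodal_zero]; exact hprim.2.1
    | succ i' => rw [← epipodal_tail]; exact htail i'
end

section
/- Let B = (b_1; ...; b_k) ∈ F_q^{k×n} be a basis, c ∈ F_q, and 1 ≤ i < j ≤ k. If B' is obtained from B by replacing b_j with b_j + c·b_i, then every epipodal vector of B' equals the corresponding epipodal vector of B. -/
/-- Replacing `b_j` by `b_j + c·b_i` for `i < j` does not change any epipodal vector. -/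
theorem epipodal_update_add_smul {F : Type} [Field F] [Fintype F] {k n : ℕ}
    (B : Fin k → Fin n → F) (c : F) (i j : Fin k) (hij : i < j) :
    ∀ m, epipodal (Function.update B j (B j + c • B i)) m = epipodal B m := by
  intro m
  funext x
  set B' := Function.update B j (B j + c • B i) with hB'
  have hBi : B' i = B i := Function.update_of_ne (ne_of_lt hij) _ _
  have hne : ∀ l : Fin k, l ≠ j → B' l = B l := fun l hl =>
    Function.update_of_ne hl _ _
  have hBj : B' j = B j + c • B i := Function.update_self _ _ _
  simp only [epipodal]
  have hcond : (∃ l, l < m ∧ B' l x ≠ 0) ↔ (∃ l, l < m ∧ B l x ≠ 0) := by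
    constructor
    · rintro ⟨l, hlm, hl⟩
      by_cases hlj : l = j
      · subst hlj
        rw [hBj] at hl
        by_cases hBjx : B l x ≠ 0
        · exact ⟨l, hlm, hBjx⟩
        · push_neg at hBjx
          refine ⟨i, lt_trans hij hlm, ?_⟩
          intro h0
          apply hl
          simp [hBjx, h0]
      · exact ⟨l, hlm, by rwa [hne l hlj] at hl⟩
    · rintro ⟨l, hlm, hl⟩
      by_cases hlj : l = j
      · subst hlj
        by_cases hB'jx : B' l x ≠ 0
        · exact ⟨l, hlm, hB'jx⟩
        · push_neg at hB'jx
          refine ⟨i, lt_trans hij hlm, ?_⟩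
          rw [hBj] at hB'jx
          intro h0
          rw [hBi] at h0
          apply hl
          simpa [h0] using hB'jx
      · exact ⟨l, hlm, by rwa [hne l hlj]⟩
  by_cases h : ∃ l, l < m ∧ B l x ≠ 0
  · rw [if_pos h, if_pos (hcond.mpr h)]
  · rw [if_neg h, if_neg (fun h' => h (hcond.mp h'))]
    by_cases hmj : m = j
    · subst hmj
      rw [hBj]
      push_neg at h
      have hix : B i x = 0 := h i hij
      simp [hix]
    · rw [hne m hmj]
end

section
/- Let B ∈ F_q^{k×n} be a basis, 1 ≤ i ≤ j ≤ k, and A ∈ F_q^{(j−i+1)×(j−i+1)} invertible. If B' := (I_{i−1} ⊕ A ⊕ I_{k−j}) B, then Σ_{m=i}^{j} |(b'_m)^+| = Σ_{m=i}^{j} |b_m^+|. -/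
open Classical in
/-- Apply the block-diagonal transformation `I_a ⊕ A ⊕ I_c` to the rows of `B`. -/
noncomputable def applyBlock {F : Type} [Field F] {a b c n : ℕ}
    (A : Matrix (Fin b) (Fin b) F) (B : Fin (a + b + c) → Fin n → F) :
    Fin (a + b + c) → Fin n → F :=
  fun m =>
    if h : (m : ℕ) < a ∨ a + b ≤ (m : ℕ) then B m
    else ∑ t : Fin b, A ⟨(m : ℕ) - a, by omega⟩ t • B ⟨a + (t : ℕ), by omega⟩

open Classical in
/-- Per-column count of epipodal nonzeros within the block, as an indicator. -/
private lemma epipodal_col_sum {F : Type} [Field F] [DecidableEq F] {a b c n : ℕ} (hb : 0 < b)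
    (C : Fin (a + b + c) → Fin n → F) (j : Fin n) :
    (∑ t : Fin b, if epipodal C ⟨a + (t : ℕ), by have := t.2; omega⟩ j ≠ 0 then (1 : ℕ) else 0) =
      (if (∀ m : Fin (a + b + c), (m : ℕ) < a → C m j = 0) ∧
          (∃ m : Fin (a + b + c), (m : ℕ) < a + b ∧ C m j ≠ 0) then 1 else 0) := by
  by_cases hP : (∀ m : Fin (a + b + c), (m : ℕ) < a → C m j = 0) ∧
      (∃ m : Fin (a + b + c), (m : ℕ) < a + b ∧ C m j ≠ 0)
  · rw [if_pos hP]
    obtain ⟨hz, m, hm, hmne⟩ := hP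
    have hma : a ≤ (m : ℕ) := by
      by_contra h
      exact hmne (hz m (by omega))
    -- minimal index inside the block with nonzero entry
    have hQ : ∃ s : ℕ, ∃ hs : s < b, C ⟨a + s, by omega⟩ j ≠ 0 := by
      refine ⟨(m : ℕ) - a, by omega, ?_⟩
      have : (⟨a + ((m : ℕ) - a), by omega⟩ : Fin (a + b + c)) = m := by
        apply Fin.ext; simp; omega
      rw [this]; exact hmne
    set s₀ := Nat.find hQ with hs₀def
    obtain ⟨hs₀b, hs₀ne⟩ := Nat.find_spec hQ
    have hmin : ∀ s : Fin b, (s : ℕ) < s₀ → C ⟨a + (s : ℕ), by omega⟩ j = 0 := by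
      intro s hs
      by_contra h
      exact Nat.find_min hQ hs ⟨s.2, h⟩
    rw [Finset.sum_eq_single ⟨s₀, hs₀b⟩]
    · rw [if_pos]
      simp only [epipodal]
      rw [if_neg]
      · exact hs₀ne
      · rintro ⟨m', hm', hm'ne⟩
        have hm'lt : (m' : ℕ) < a + s₀ := hm'
        by_cases h1 : (m' : ℕ) < a
        · exact hm'ne (hz m' h1)
        · have : C ⟨a + ((⟨(m' : ℕ) - a, by omega⟩ : Fin b) : ℕ), by omega⟩ j = 0 :=
            hmin ⟨(m' : ℕ) - a, by omega⟩ (by simp; omega)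
          apply hm'ne
          have he : (⟨a + ((m' : ℕ) - a), by omega⟩ : Fin (a + b + c)) = m' := by
            apply Fin.ext; simp; omega
          rw [← he]; exact this
    · intro t _ ht
      rw [if_neg]
      simp only [ne_eq, not_not, epipodal]
      rcases lt_or_gt_of_ne (fun h : (t : ℕ) = s₀ => ht (Fin.ext h)) with h | h
      · split
        · rfl
        · exact hmin t h
      · rw [if_pos]
        refine ⟨⟨a + s₀, by omega⟩, ?_, hs₀ne⟩
        show a + s₀ < a + (t : ℕ)
        omega
    · intro h; exact absurd (Finset.mem_univ _) h
  · rw [if_neg hP]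
    apply Finset.sum_eq_zero
    intro t _
    rw [if_neg]
    simp only [ne_eq, not_not, epipodal]
    by_cases hz : ∀ m : Fin (a + b + c), (m : ℕ) < a → C m j = 0
    · have hnn : ∀ m : Fin (a + b + c), (m : ℕ) < a + b → C m j = 0 := by
        intro m hm
        by_contra h
        exact hP ⟨hz, m, hm, h⟩
      split
      · rfl
      · exact hnn _ (by simp)
    · push_neg at hz
      obtain ⟨m, hm, hmne⟩ := hz
      rw [if_pos]
      refine ⟨m, ?_, hmne⟩
      show (m : ℕ) < a + (t : ℕ)
      omega

private lemma applyBlock_low {F : Type} [Field F] {a b c n : ℕ}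
    (A : Matrix (Fin b) (Fin b) F) (B : Fin (a + b + c) → Fin n → F)
    (m : Fin (a + b + c)) (h : (m : ℕ) < a ∨ a + b ≤ (m : ℕ)) :
    applyBlock A B m = B m := by
  simp only [applyBlock, dif_pos h]

open Classical in
private lemma applyBlock_block {F : Type} [Field F] {a b c n : ℕ}
    (A : Matrix (Fin b) (Fin b) F) (B : Fin (a + b + c) → Fin n → F)
    (t : Fin b) (j : Fin n) :
    applyBlock A B ⟨a + (t : ℕ), by have := t.2; omega⟩ j =
      ∑ s : Fin b, A t s * B ⟨a + (s : ℕ), by have := s.2; omega⟩ j := by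
  have h : ¬((a + (t : ℕ)) < a ∨ a + b ≤ a + (t : ℕ)) := by
    have := t.2; omega
  simp only [applyBlock, dif_neg h]
  have he : (⟨a + (t : ℕ) - a, by omega⟩ : Fin b) = t := by
    apply Fin.ext; simp
  rw [he]
  simp [Finset.sum_apply, Pi.smul_apply, smul_eq_mul]

open Classical in
private lemma col_prop_iff {F : Type} [Field F] [Fintype F] [DecidableEq F]
    {a b c n : ℕ} (A : Matrix (Fin b) (Fin b) F) (hA : IsUnit A)
    (B : Fin (a + b + c) → Fin n → F) (j : Fin n) :
    ((∀ m : Fin (a + b + c), (m : ℕ) < a → applyBlock A B m j = 0) ∧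
      (∃ m : Fin (a + b + c), (m : ℕ) < a + b ∧ applyBlock A B m j ≠ 0)) ↔
    ((∀ m : Fin (a + b + c), (m : ℕ) < a → B m j = 0) ∧
      (∃ m : Fin (a + b + c), (m : ℕ) < a + b ∧ B m j ≠ 0)) := by
  have hlow : ∀ m : Fin (a + b + c), (m : ℕ) < a → applyBlock A B m j = B m j := by
    intro m hm; rw [applyBlock_low A B m (Or.inl hm)]
  have hdet : IsUnit A.det := (Matrix.isUnit_iff_isUnit_det A).mp hA
  constructor
  · rintro ⟨h1, m, hm, hmne⟩
    have h1' : ∀ m : Fin (a + b + c), (m : ℕ) < a → B m j = 0 := by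
      intro m hm; rw [← hlow m hm]; exact h1 m hm
    refine ⟨h1', ?_⟩
    by_cases hma : (m : ℕ) < a
    · exact absurd (h1 m hma) hmne
    · -- m is in the block
      have hme : (⟨a + ((m : ℕ) - a), by omega⟩ : Fin (a + b + c)) = m := by
        apply Fin.ext; simp; omega
      set t : Fin b := ⟨(m : ℕ) - a, by omega⟩ with ht
      have : applyBlock A B ⟨a + (t : ℕ), by omega⟩ j ≠ 0 := by
        have : (⟨a + (t : ℕ), by omega⟩ : Fin (a + b + c)) = m := hme
        rw [this]; exact hmne
      rw [applyBlock_block] at this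
      obtain ⟨s, _, hs⟩ := Finset.exists_ne_zero_of_sum_ne_zero this
      refine ⟨⟨a + (s : ℕ), by omega⟩, by simp [s.2], ?_⟩
      intro h0
      exact hs (by rw [h0, mul_zero])
  · rintro ⟨h1, m, hm, hmne⟩
    have h1' : ∀ m : Fin (a + b + c), (m : ℕ) < a → applyBlock A B m j = 0 := by
      intro m hm; rw [hlow m hm]; exact h1 m hm
    refine ⟨h1', ?_⟩
    by_cases hma : (m : ℕ) < a
    · exact absurd (h1 m hma) hmne
    · -- the block column vector is nonzero; its image under A is nonzero
      set v : Fin b → F := fun s => B ⟨a + (s : ℕ), by omega⟩ j with hv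
      have hvne : v ≠ 0 := by
        intro h0
        apply hmne
        have hme : (⟨a + ((m : ℕ) - a), by omega⟩ : Fin (a + b + c)) = m := by
          apply Fin.ext; simp; omega
        have := congrFun h0 ⟨(m : ℕ) - a, by omega⟩
        simp only [hv, Pi.zero_apply] at this
        rw [← hme]; exact this
      have hAv : A.mulVec v ≠ 0 := by
        intro h0
        apply hvne
        have : A⁻¹.mulVec (A.mulVec v) = v := by
          rw [Matrix.mulVec_mulVec, Matrix.nonsing_inv_mul A hdet, Matrix.one_mulVec]
        rw [← this, h0, Matrix.mulVec_zero]
      obtain ⟨t, htne⟩ := Function.ne_iff.mp hAv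
      refine ⟨⟨a + (t : ℕ), by omega⟩, by simp [t.2], ?_⟩
      rw [applyBlock_block]
      simpa [Matrix.mulVec, dotProduct, hv] using htne

/-- Applying an invertible block-diagonal transformation `I_{i−1} ⊕ A ⊕ I_{k−j}` preserves
the sum of the Hamming weights of the epipodal vectors within the block
(here `a = i − 1`, `b = j − i + 1 ≥ 1`, `c = k − j`). -/
theorem sum_epipodal_weights_applyBlock {F : Type} [Field F] [Fintype F] [DecidableEq F]
    {a b c n : ℕ} (hb : 0 < b) (A : Matrix (Fin b) (Fin b) F) (hA : IsUnit A)
    (B : Fin (a + b + c) → Fin n → F) :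
    ∑ t : Fin b, hammingNorm (epipodal (applyBlock A B) ⟨a + (t : ℕ), by omega⟩) =
      ∑ t : Fin b, hammingNorm (epipodal B ⟨a + (t : ℕ), by omega⟩) := by
  classical
  have hnorm : ∀ (C : Fin (a + b + c) → Fin n → F),
      ∑ t : Fin b, hammingNorm (epipodal C ⟨a + (t : ℕ), by omega⟩) =
        ∑ j : Fin n, ∑ t : Fin b,
          (if epipodal C ⟨a + (t : ℕ), by omega⟩ j ≠ 0 then (1 : ℕ) else 0) := by
    intro C
    rw [Finset.sum_comm]
    refine Finset.sum_congr rfl fun t _ => ?_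
    rw [hammingNorm, Finset.card_filter]
  rw [hnorm, hnorm]
  refine Finset.sum_congr rfl fun j _ => ?_
  rw [epipodal_col_sum hb, epipodal_col_sum hb]
  by_cases h : (∀ m : Fin (a + b + c), (m : ℕ) < a → B m j = 0) ∧
      (∃ m : Fin (a + b + c), (m : ℕ) < a + b ∧ B m j ≠ 0)
  · rw [if_pos h, if_pos ((col_prop_iff A hA B j).mpr h)]
  · rw [if_neg h, if_neg (fun h' => h ((col_prop_iff A hA B j).mp h'))]
end

section
/- For a code C ⊆ F_q^n, a set S ⊆ Supp(C) is redundant for C if and only if for every i, j ∈ S there exists a nonzero scalar a ∈ F_q* such that c_j = a·c_i for all codewords c ∈ C. -/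
/-- A set `S` of coordinates is redundant for `C` if `S ⊆ Supp(C)` and for every
codeword `c` and all `i, j ∈ S`, `c i = 0` iff `c j = 0`. -/
def Redundant {F : Type} [Field F] {n : ℕ} (C : Submodule F (Fin n → F))
    (S : Set (Fin n)) : Prop :=
  S ⊆ codeSupp C ∧ ∀ c ∈ C, ∀ i ∈ S, ∀ j ∈ S, (c i = 0 ↔ c j = 0)

/-- A set `S ⊆ Supp(C)` is redundant for `C` iff for every `i, j ∈ S` there is a nonzero
scalar `a` with `c j = a · c i` for all codewords `c ∈ C`. -/
theorem redundant_iff_scalar {F : Type} [Field F] [Fintype F] {n : ℕ}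
    (C : Submodule F (Fin n → F)) (S : Set (Fin n)) (hS : S ⊆ codeSupp C) :
    Redundant C S ↔
      ∀ i ∈ S, ∀ j ∈ S, ∃ a : F, a ≠ 0 ∧ ∀ c ∈ C, c j = a * c i := by
  constructor
  · rintro ⟨-, hred⟩ i hi j hj
    obtain ⟨c0, hc0C, hc0i⟩ := hS hi
    have hc0j : c0 j ≠ 0 := fun h => hc0i (((hred c0 hc0C i hi j hj)).mpr h)
    refine ⟨c0 j / c0 i, div_ne_zero hc0j hc0i, fun c hc => ?_⟩
    set d : Fin n → F := c - (c i / c0 i) • c0 with hd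
    have hdC : d ∈ C := C.sub_mem hc (C.smul_mem _ hc0C)
    have hdi : d i = 0 := by
      simp [hd, div_mul_cancel₀ _ hc0i]
    have hdj : d j = 0 := (hred d hdC i hi j hj).mp hdi
    have : c j = (c i / c0 i) * c0 j := by
      have := hdj
      simp only [hd, Pi.sub_apply, Pi.smul_apply, smul_eq_mul, sub_eq_zero] at this
      exact this
    rw [this]
    field_simp
  · intro h
    refine ⟨hS, fun c hc i hi j hj => ?_⟩
    obtain ⟨a, ha, hja⟩ := h i hi j hj
    obtain ⟨b, hb, hib⟩ := h j hj i hi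
    constructor
    · intro hzi; rw [hja c hc, hzi, mul_zero]
    · intro hzj; rw [hib c hc, hzj, mul_zero]
end

section
/- For a code C ⊆ F_q^n of dimension k and a set S ⊆ [n], there exists a basis B = (b_1; ...; b_k) of C with S ⊆ Supp(b_k^+) if and only if S is a redundant set of coordinates for C. -/
set_option maxHeartbeats 1000000
set_option synthInstance.maxHeartbeats 400000

/-- For a `k`-dimensional code `C` and a set `S` of coordinates, there is a basis of `C`
whose last epipodal vector has support containing `S` iff `S` is redundant for `C`. -/
theorem exists_basis_last_epipodal_iff_redundant {F : Type} [Field F] [Fintype F]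
    {n k : ℕ} (hk : 0 < k) (C : Submodule F (Fin n → F))
    (hC : Module.finrank F C = k) (S : Set (Fin n)) :
    (∃ B : Fin k → Fin n → F, LinearIndependent F B ∧
        Submodule.span F (Set.range B) = C ∧
        ∀ j ∈ S, epipodal B ⟨k - 1, by omega⟩ j ≠ 0) ↔
      Redundant C S := by
  classical
  obtain ⟨m, rfl⟩ : ∃ m, k = m + 1 := ⟨k - 1, by omega⟩
  have hlidx : (⟨m + 1 - 1, by omega⟩ : Fin (m + 1)) = Fin.last m := rfl
  constructor
  · rintro ⟨B, hli, hspan, hep⟩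
    have key : ∀ j ∈ S, (∀ p : Fin (m + 1), p < Fin.last m → B p j = 0) ∧
        B (Fin.last m) j ≠ 0 := by
      intro j hj
      have h := hep j hj
      rw [hlidx] at h
      by_cases hex : ∃ p, p < Fin.last m ∧ B p j ≠ 0
      · exact absurd (by simp [epipodal, if_pos hex]) h
      · have hall : ∀ p, p < Fin.last m → B p j = 0 := by push_neg at hex; exact hex
        refine ⟨hall, ?_⟩
        have he : epipodal B (Fin.last m) j = B (Fin.last m) j := by
          simp only [epipodal]; exact if_neg hex
        exact he ▸ h
    constructor
    · intro j hj
      refine ⟨B (Fin.last m), ?_, (key j hj).2⟩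
      rw [← hspan]
      exact Submodule.subset_span ⟨Fin.last m, rfl⟩
    · intro c hcC i hi j hj
      rw [← hspan] at hcC
      obtain ⟨a, ha⟩ := (Submodule.mem_span_range_iff_exists_fun F).mp hcC
      have hval : ∀ j ∈ S, c j = a (Fin.last m) * B (Fin.last m) j := by
        intro j hj
        rw [← ha, Finset.sum_apply, Fin.sum_univ_castSucc]
        have hz : ∀ i : Fin m, (a i.castSucc • B i.castSucc) j = 0 := fun i => by
          rw [Pi.smul_apply, (key j hj).1 _ (Fin.castSucc_lt_last i), smul_zero]
        simp [hz, smul_eq_mul]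
      rw [hval i hi, hval j hj]
      constructor <;> intro h0
      · rcases mul_eq_zero.mp h0 with h | h
        · rw [h, zero_mul]
        · exact absurd h (key i hi).2
      · rcases mul_eq_zero.mp h0 with h | h
        · rw [h, zero_mul]
        · exact absurd h (key j hj).2
  · rintro ⟨hsub, hiff⟩
    have hCfd : FiniteDimensional F C := inferInstance
    by_cases hS : S.Nonempty
    · obtain ⟨j0, hj0⟩ := hS
      obtain ⟨c, hcC, hcj0⟩ := hsub hj0
      set φ : C →ₗ[F] F := (LinearMap.proj j0).comp C.subtype with hφ
      have hφsurj : Function.Surjective φ := by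
        intro x
        refine ⟨(x * (c j0)⁻¹) • ⟨c, hcC⟩, ?_⟩
        simp only [hφ, LinearMap.comp_apply, Submodule.coe_subtype, SetLike.val_smul,
          LinearMap.proj_apply, Pi.smul_apply, smul_eq_mul]
        field_simp
      have hker : Module.finrank F (LinearMap.ker φ) = m := by
        have h1 := LinearMap.finrank_range_add_finrank_ker φ
        rw [LinearMap.range_eq_top.mpr hφsurj, finrank_top, hC] at h1
        have : Module.finrank F F = 1 := Module.finrank_self F
        omega
      haveI : Module.Free F (LinearMap.ker φ) := Module.Free.of_divisionRing F ↥(LinearMap.ker φ)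
      let b := Module.finBasisOfFinrankEq F (LinearMap.ker φ) hker
      let f : LinearMap.ker φ →ₗ[F] (Fin n → F) := C.subtype.comp (LinearMap.ker φ).subtype
      have hfinj : Function.Injective f :=
        Subtype.val_injective.comp Subtype.val_injective
      let v : Fin m → Fin n → F := fun i => ((b i : C) : Fin n → F)
      have hvC : ∀ i, v i ∈ C := fun i => (b i : C).2
      have hvj0 : ∀ i, v i j0 = 0 := fun i => (b i).2
      have hvS : ∀ i, ∀ j ∈ S, v i j = 0 := fun i j hj =>
        (hiff (v i) (hvC i) j hj j0 hj0).mpr (hvj0 i)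
      have hvli : LinearIndependent F v :=
        b.linearIndependent.map_injOn f hfinj.injOn
      have hcnot : c ∉ Submodule.span F (Set.range v) := by
        intro hmem
        have hle : Submodule.span F (Set.range v) ≤
            LinearMap.ker (LinearMap.proj j0 : (Fin n → F) →ₗ[F] F) := by
          rw [Submodule.span_le]
          rintro _ ⟨i, rfl⟩
          exact hvj0 i
        exact hcj0 (hle hmem)
      refine ⟨Fin.snoc v c, ?_, ?_, ?_⟩
      · exact linearIndependent_fin_snoc.mpr ⟨hvli, hcnot⟩
      · have hle : Submodule.span F (Set.range (Fin.snoc v c : Fin (m + 1) → Fin n → F)) ≤ C := by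
          rw [Submodule.span_le]
          rintro _ ⟨i, rfl⟩
          refine Fin.lastCases ?_ ?_ i
          · simpa using hcC
          · intro i; simpa using hvC i
        refine Submodule.eq_of_le_of_finrank_le hle ?_
        rw [hC, finrank_span_eq_card (linearIndependent_fin_snoc.mpr ⟨hvli, hcnot⟩)]
        simp
      · intro j hj
        have hcj : c j ≠ 0 := fun h0 => hcj0 ((hiff c hcC j0 hj0 j hj).mpr h0)
        have hnone : ¬ ∃ p, p < (⟨m + 1 - 1, by omega⟩ : Fin (m + 1)) ∧
            (Fin.snoc v c : Fin (m + 1) → Fin n → F) p j ≠ 0 := by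
          rintro ⟨p, hp, hpne⟩
          apply hpne
          rw [hlidx] at hp
          obtain ⟨q, rfl⟩ := Fin.exists_castSucc_eq.mpr (ne_of_lt hp)
          rw [Fin.snoc_castSucc]
          exact hvS q j hj
        simp only [epipodal, if_neg hnone]
        rw [hlidx, Fin.snoc_last]
        exact hcj
    · rw [Set.not_nonempty_iff_eq_empty] at hS
      subst hS
      let b := Module.finBasisOfFinrankEq F C hC
      refine ⟨fun i => ((b i : C) : Fin n → F), ?_, ?_, ?_⟩
      · exact b.linearIndependent.map' C.subtype (LinearMap.ker_eq_bot.mpr Subtype.val_injective)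
      · have : Set.range (fun i => ((b i : C) : Fin n → F)) = C.subtype '' Set.range b := by
          rw [← Set.range_comp]; rfl
        rw [this, Submodule.span_image, b.span_eq, Submodule.map_top, Submodule.range_subtype]
      · intro j hj
        exact absurd hj (Set.notMem_empty j)
end

section
/- If B = (b_1; ...; b_k) ∈ F_q^{k×n} is an LLL-reduced basis, then for all 1 ≤ i ≤ k−1, |b_{i+1}^+| ≥ ⌈|b_i^+| / q⌉. -/
open Classical in
/-- `projRow B i m` is `π_i(b_m)`: row `m` of `B` projected orthogonally to the supports
of rows `0, …, i−1`.  In particular `projRow B i i` is the `i`-th epipodal vector. -/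
noncomputable def projRow {F : Type} [Field F] {k n : ℕ}
    (B : Fin k → Fin n → F) (i m : Fin k) : Fin n → F :=
  fun j => if ∃ t, t < i ∧ B t j ≠ 0 then 0 else B m j

/-- A basis is LLL-reduced if it is proper and each epipodal vector `b_i^+` is a shortest
nonzero codeword of the two-dimensional code generated by `B_{[i,i+1]}`. -/
def IsLLLReduced {F : Type} [Field F] [Fintype F] [DecidableEq F] {k n : ℕ}
    (B : Fin k → Fin n → F) : Prop :=
  (∀ i, projRow B i i ≠ 0) ∧
  ∀ i : Fin k, ∀ hi : (i : ℕ) + 1 < k,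
    ∀ c ∈ Submodule.span F {projRow B i i, projRow B i ⟨(i : ℕ) + 1, hi⟩},
      c ≠ 0 → hammingNorm (projRow B i i) ≤ hammingNorm c

/-- The key combinatorial lemma, stated for abstract vectors `u v w`:
if `w` is `v` zeroed out on the support of `u`, `u ≠ 0`, `w ≠ 0`, and `u` is a
vector of minimal Hamming weight among nonzero vectors of `span {u, v}`, then
`|u| ≤ q * |w|`. -/
theorem lll_key {F : Type} [Field F] [Fintype F] [DecidableEq F] {n q : ℕ}
    (hq : Fintype.card F = q) (u v w : Fin n → F)
    (hwj : ∀ j, w j = if u j ≠ 0 then (0 : F) else v j)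
    (hune : u ≠ 0) (hwne : w ≠ 0)
    (hmin : ∀ c ∈ Submodule.span F {u, v}, c ≠ 0 → hammingNorm u ≤ hammingNorm c) :
    hammingNorm u ≤ q * hammingNorm w := by
  classical
  set S : Finset (Fin n) := Finset.univ.filter (fun j => u j ≠ 0) with hS
  set V : Finset (Fin n) := Finset.univ.filter (fun j => v j ≠ 0) with hV
  set M : Finset (Fin n) := Finset.univ.filter (fun j => w j ≠ 0) with hM
  set T : Finset (Fin n) := Finset.univ.filter (fun j => v j ≠ 0 ∧ u j ≠ 0) with hT
  have hnormu : hammingNorm u = S.card := by simp [hammingNorm, hS]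
  have hnormw : hammingNorm w = M.card := by simp [hammingNorm, hM]
  have hwne_iff : ∀ j, w j ≠ 0 ↔ (v j ≠ 0 ∧ u j = 0) := by
    intro j
    rw [hwj j]
    by_cases h : u j ≠ 0
    · simp [h]
    · push_neg at h
      simp [h]
  have humem : u ∈ Submodule.span F {u, v} :=
    Submodule.subset_span (Set.mem_insert _ _)
  have hvmem : v ∈ Submodule.span F {u, v} :=
    Submodule.subset_span (Set.mem_insert_of_mem _ rfl)
  have hvne : v ≠ 0 := by
    obtain ⟨j, hj⟩ := Function.ne_iff.1 hwne
    have hj' : w j ≠ 0 := by simpa using hj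
    exact Function.ne_iff.2 ⟨j, ((hwne_iff j).1 hj').1⟩
  -- Step A : S.card ≤ V.card
  have hSV : S.card ≤ V.card := by
    have := hmin v hvmem hvne
    rw [hnormu] at this
    have hnv : hammingNorm v = V.card := by simp [hammingNorm, hV]
    rw [hnv] at this
    exact this
  -- V.card = T.card + M.card
  have hVTM : V.card = T.card + M.card := by
    have h1 : T = V.filter (fun j => u j ≠ 0) := by
      ext j
      simp only [hT, hV, Finset.mem_filter, Finset.mem_univ, true_and]
      try tauto
    have h2 : M = V.filter (fun j => ¬ u j ≠ 0) := by
      ext j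
      simp only [hM, hV, Finset.mem_filter, Finset.mem_univ, true_and, hwne_iff j]
      tauto
    rw [h1, h2, Finset.card_filter_add_card_filter_not]
  -- Step B : for each nonzero lam, few coordinates of S are killed by lam
  have key : ∀ lam : F, lam ≠ 0 →
      (S.filter (fun j => u j + lam * v j = 0)).card ≤ M.card := by
    intro lam hlam
    have hcne : u + lam • v ≠ 0 := by
      intro h0
      apply hwne
      funext j
      have hj : u j + lam * v j = 0 := by
        have := congrFun h0 j
        simpa using this
      rw [hwj j]
      by_cases h : u j ≠ 0
      · simp [h]
      · push_neg at h
        rw [if_neg (by simpa using h)]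
        rw [h, zero_add] at hj
        rcases mul_eq_zero.1 hj with h' | h'
        · exact absurd h' hlam
        · exact h'
    have hcmem : u + lam • v ∈ Submodule.span F {u, v} :=
      Submodule.add_mem _ humem (Submodule.smul_mem _ _ hvmem)
    have hle := hmin _ hcmem hcne
    have hnormc : hammingNorm (u + lam • v) =
        (S.filter (fun j => u j + lam * v j ≠ 0)).card + M.card := by
      have h0 : hammingNorm (u + lam • v) =
          (Finset.univ.filter (fun j => u j + lam * v j ≠ 0)).card := by
        simp [hammingNorm]
      rw [h0]
      have hsplit : (Finset.univ.filter (fun j => u j + lam * v j ≠ 0)) =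
          (S.filter (fun j => u j + lam * v j ≠ 0)) ∪ M := by
        ext j
        simp only [Finset.mem_union, Finset.mem_filter, Finset.mem_univ, true_and,
          hS, hM, hwne_iff j]
        constructor
        · intro hj
          by_cases h : u j ≠ 0
          · exact Or.inl ⟨h, hj⟩
          · push_neg at h
            refine Or.inr ⟨?_, h⟩
            intro hv0
            apply hj
            rw [h, hv0, mul_zero, add_zero]
        · rintro (⟨h1, h2⟩ | ⟨h1, h2⟩)
          · exact h2
          · rw [h2, zero_add]
            exact mul_ne_zero hlam h1
      have hdisj : Disjoint (S.filter (fun j => u j + lam * v j ≠ 0)) M := by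
        rw [Finset.disjoint_left]
        intro j hj hjM
        have h1 : u j ≠ 0 := by
          have := Finset.mem_of_mem_filter j hj
          rw [hS] at this
          exact (Finset.mem_filter.1 this).2
        have h2 : u j = 0 := by
          rw [hM] at hjM
          exact ((hwne_iff j).1 (Finset.mem_filter.1 hjM).2).2
        exact h1 h2
      rw [hsplit, Finset.card_union_of_disjoint hdisj]
    rw [hnormu, hnormc] at hle
    have hpartition : (S.filter (fun j => u j + lam * v j = 0)).card
        + (S.filter (fun j => u j + lam * v j ≠ 0)).card = S.card :=
      Finset.card_filter_add_card_filter_not (fun j => u j + lam * v j = 0)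
    omega
  -- Step C : T is covered by the killed sets
  have hTcover : T ⊆ (Finset.univ.erase (0 : F)).biUnion
      (fun lam => S.filter (fun j => u j + lam * v j = 0)) := by
    intro j hj
    rw [hT] at hj
    obtain ⟨hvj, huj⟩ := (Finset.mem_filter.1 hj).2
    refine Finset.mem_biUnion.2 ⟨-(u j / v j), ?_, ?_⟩
    · refine Finset.mem_erase.2 ⟨?_, Finset.mem_univ _⟩
      simp only [ne_eq, neg_eq_zero, div_eq_zero_iff, not_or]
      exact ⟨huj, hvj⟩
    · refine Finset.mem_filter.2 ⟨?_, ?_⟩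
      · rw [hS]; exact Finset.mem_filter.2 ⟨Finset.mem_univ _, huj⟩
      · field_simp
        ring
  have hTcard : T.card ≤ (q - 1) * M.card := by
    calc T.card ≤ ((Finset.univ.erase (0 : F)).biUnion
        (fun lam => S.filter (fun j => u j + lam * v j = 0))).card :=
          Finset.card_le_card hTcover
      _ ≤ ∑ lam ∈ Finset.univ.erase (0 : F),
            (S.filter (fun j => u j + lam * v j = 0)).card := Finset.card_biUnion_le
      _ ≤ ∑ _lam ∈ Finset.univ.erase (0 : F), M.card := by
          apply Finset.sum_le_sum
          intro lam hlam
          exact key lam (Finset.mem_erase.1 hlam).1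
      _ = (q - 1) * M.card := by
          rw [Finset.sum_const, smul_eq_mul, Finset.card_erase_of_mem (Finset.mem_univ _),
            Finset.card_univ, hq]
  have hqpos : 0 < q := hq ▸ Fintype.card_pos
  rw [hnormu, hnormw]
  have hfin : (q - 1) * M.card + M.card = q * M.card := by
    have h1 : (q - 1) + 1 = q := by omega
    calc (q - 1) * M.card + M.card = ((q - 1) + 1) * M.card := by ring
      _ = q * M.card := by rw [h1]
  omega

/-- For an LLL-reduced basis, `|b_{i+1}^+| ≥ ⌈|b_i^+| / q⌉`. -/
theorem lll_epipodal_decay {F : Type} [Field F] [Fintype F] [DecidableEq F]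
    {k n q : ℕ} (hq : Fintype.card F = q) (B : Fin k → Fin n → F)
    (hB : IsLLLReduced B) (i : Fin k) (hi : (i : ℕ) + 1 < k) :
    ⌈(hammingNorm (projRow B i i) : ℚ) / q⌉₊ ≤
      hammingNorm (projRow B ⟨(i : ℕ) + 1, hi⟩ ⟨(i : ℕ) + 1, hi⟩) := by
  classical
  obtain ⟨hprop, hLLL⟩ := hB
  have hune : projRow B i i ≠ 0 := hprop i
  have hwne : projRow B ⟨(i : ℕ) + 1, hi⟩ ⟨(i : ℕ) + 1, hi⟩ ≠ 0 := hprop _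
  have hwj : ∀ j, projRow B ⟨(i : ℕ) + 1, hi⟩ ⟨(i : ℕ) + 1, hi⟩ j =
      if projRow B i i j ≠ 0 then (0 : F) else projRow B i ⟨(i : ℕ) + 1, hi⟩ j := by
    intro j
    simp only [projRow]
    by_cases h1 : ∃ t, t < i ∧ B t j ≠ 0
    · obtain ⟨t, ht, htj⟩ := h1
      have hti' : t < (⟨(i : ℕ) + 1, hi⟩ : Fin k) := by
        have h' : (t : ℕ) < (i : ℕ) := ht
        simp only [Fin.lt_def]
        omega
      simp only [if_pos (⟨t, hti', htj⟩ :
          ∃ t', t' < (⟨(i : ℕ) + 1, hi⟩ : Fin k) ∧ B t' j ≠ 0),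
        if_pos (⟨t, ht, htj⟩ : ∃ t, t < i ∧ B t j ≠ 0)]
      simp
    · simp only [if_neg h1]
      by_cases h2 : B i j ≠ 0
      · rw [if_pos ⟨i, by simp [Fin.lt_def], h2⟩, if_pos h2]
      · rw [if_neg, if_neg h2]
        rintro ⟨t, ht, htj⟩
        have htval : (t : ℕ) < (i : ℕ) + 1 := ht
        rcases Nat.lt_or_ge (t : ℕ) (i : ℕ) with h | h
        · exact h1 ⟨t, h, htj⟩
        · have heq : t = i := Fin.ext (by omega)
          exact h2 (heq ▸ htj)
  have hmain := lll_key hq (projRow B i i) (projRow B i ⟨(i : ℕ) + 1, hi⟩)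
    (projRow B ⟨(i : ℕ) + 1, hi⟩ ⟨(i : ℕ) + 1, hi⟩) hwj hune hwne (hLLL i hi)
  have hqpos : 0 < q := hq ▸ Fintype.card_pos
  rw [Nat.ceil_le, div_le_iff₀ (by exact_mod_cast hqpos)]
  calc (hammingNorm (projRow B i i) : ℚ)
      ≤ ((q * hammingNorm (projRow B ⟨(i : ℕ) + 1, hi⟩ ⟨(i : ℕ) + 1, hi⟩) : ℕ) : ℚ) := by
        exact_mod_cast hmain
    _ = (hammingNorm (projRow B ⟨(i : ℕ) + 1, hi⟩ ⟨(i : ℕ) + 1, hi⟩) : ℚ) * q := by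
        push_cast; ring
end

section
/- If B = (b_1; ...; b_k) ∈ F_q^{k×n} is an LLL-reduced basis, then n ≥ Σ_{i=0}^{k−1} ⌈|b_1| / q^i⌉ (the Griesmer bound). -/
set_option linter.unusedSectionVars false
section
variable {F : Type} [Field F] [Fintype F] [DecidableEq F] {k n : ℕ}

lemma projRow_succ_eq (B : Fin k → Fin n → F) (i : Fin k) (hi : (i:ℕ)+1 < k) (j : Fin n) :
    projRow B ⟨(i:ℕ)+1, hi⟩ ⟨(i:ℕ)+1, hi⟩ j =
      if projRow B i i j ≠ 0 then 0 else projRow B i ⟨(i:ℕ)+1, hi⟩ j := by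
  unfold projRow
  by_cases h : ∃ t, t < i ∧ B t j ≠ 0
  · have h1 : ∃ t : Fin k, t < (⟨(i:ℕ)+1, hi⟩ : Fin k) ∧ B t j ≠ 0 := by
      obtain ⟨t, ht, hb⟩ := h
      refine ⟨t, ?_, hb⟩
      rw [Fin.lt_def] at ht ⊢
      exact Nat.lt_succ_of_lt ht
    simp [h, h1]
  · by_cases h2 : B i j ≠ 0
    · have h1 : ∃ t : Fin k, t < (⟨(i:ℕ)+1, hi⟩ : Fin k) ∧ B t j ≠ 0 :=
        ⟨i, by rw [Fin.lt_def]; exact Nat.lt_succ_self _, h2⟩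
      simp [h, h1, h2]
    · push_neg at h2
      have h1 : ¬ ∃ t : Fin k, t < (⟨(i:ℕ)+1, hi⟩ : Fin k) ∧ B t j ≠ 0 := by
        rintro ⟨t, ht, hb⟩
        rw [Fin.lt_def] at ht
        rcases Nat.lt_succ_iff_lt_or_eq.mp ht with h' | h'
        · exact h ⟨t, Fin.lt_def.mpr h', hb⟩
        · exact hb (by rw [show t = i from Fin.ext h']; exact h2)
      simp [h, h1, h2]

lemma step (B : Fin k → Fin n → F) (hB : IsLLLReduced B) (i : Fin k) (hi : (i:ℕ)+1 < k) :
    hammingNorm (projRow B i i) ≤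
      Fintype.card F * hammingNorm (projRow B ⟨(i:ℕ)+1, hi⟩ ⟨(i:ℕ)+1, hi⟩) := by
  set b := projRow B i i with hb_def
  set b' := projRow B i ⟨(i:ℕ)+1, hi⟩ with hb'_def
  set b2 := projRow B ⟨(i:ℕ)+1, hi⟩ ⟨(i:ℕ)+1, hi⟩ with hb2_def
  have hfact : ∀ j, b2 j = if b j ≠ 0 then 0 else b' j := projRow_succ_eq B i hi
  set S : Finset (Fin n) := Finset.univ.filter (fun j => b j ≠ 0) with hS_def
  have hScard : S.card = hammingNorm b := rfl
  set T : F → Finset (Fin n) := fun a => S.filter (fun j => b' j / b j = a) with hT_def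
  have hsum : S.card = ∑ a : F, (T a).card :=
    Finset.card_eq_sum_card_fiberwise (fun j _ => Finset.mem_univ (b' j / b j))
  obtain ⟨a, -, ha⟩ := Finset.exists_max_image Finset.univ (fun a => (T a).card)
    (Finset.univ_nonempty)
  have hSq : S.card ≤ Fintype.card F * (T a).card := by
    calc S.card = ∑ x : F, (T x).card := hsum
      _ ≤ ∑ _x : F, (T a).card := Finset.sum_le_sum (fun x _ => ha x (Finset.mem_univ x))
      _ = Fintype.card F * (T a).card := by
          rw [Finset.sum_const, smul_eq_mul, Finset.card_univ]
  -- the codeword c = b' - a • b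
  set c : Fin n → F := b' - a • b with hc_def
  have hcj : ∀ j, c j = b' j - a * b j := fun j => rfl
  have hmem : c ∈ Submodule.span F {b, b'} := by
    apply Submodule.sub_mem
    · exact Submodule.subset_span (by simp)
    · exact Submodule.smul_mem _ _ (Submodule.subset_span (by simp))
  have hcne : c ≠ 0 := by
    intro hc0
    apply hB.1 ⟨(i:ℕ)+1, hi⟩
    funext j
    have hj : b' j = a * b j := by
      have h0 : b' j - a * b j = 0 := by rw [← hcj j]; exact congrFun hc0 j
      exact sub_eq_zero.mp h0
    rw [← hb2_def, hfact j]
    by_cases h : b j ≠ 0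
    · simp [h]
    · push_neg at h
      simp [h, hj]
  have hLLL := hB.2 i hi c hmem hcne
  -- compute hammingNorm c
  have hsupp2 : ∀ j, b2 j ≠ 0 ↔ (b j = 0 ∧ b' j ≠ 0) := by
    intro j
    rw [hfact j]
    by_cases h : b j = 0 <;> simp [h]
  have hTsub : T a ⊆ S := Finset.filter_subset _ _
  have hcnorm : hammingNorm c = (S \ T a).card + hammingNorm b2 := by
    have hset : Finset.univ.filter (fun j => c j ≠ 0)
        = (S \ T a) ∪ Finset.univ.filter (fun j => b2 j ≠ 0) := by
      ext j
      simp only [Finset.mem_filter, Finset.mem_union, Finset.mem_sdiff, Finset.mem_univ,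
        true_and, hS_def, hT_def, hsupp2 j, hcj j]
      by_cases h : b j = 0
      · simp only [h, mul_zero, sub_zero, ne_eq, not_true_eq_false, false_and]
        all_goals tauto
      · have : b' j - a * b j ≠ 0 ↔ ¬ (b' j / b j = a) := by
          rw [div_eq_iff h]
          exact sub_ne_zero
        simp only [h, ne_eq, not_false_eq_true, true_and, not_true_eq_false,
          false_and, or_false, this]
    have hdisj : Disjoint (S \ T a) (Finset.univ.filter (fun j => b2 j ≠ 0)) := by
      rw [Finset.disjoint_left]
      intro j hj hj2
      rw [Finset.mem_filter] at hj2
      have := (hsupp2 j).mp hj2.2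
      rw [Finset.mem_sdiff, hS_def, Finset.mem_filter] at hj
      exact hj.1.2 this.1
    show (Finset.univ.filter (fun j => c j ≠ 0)).card = _
    rw [hset, Finset.card_union_of_disjoint hdisj]
    rfl
  have hcard_sdiff : (S \ T a).card = S.card - (T a).card := Finset.card_sdiff_of_subset hTsub
  have hTle : (T a).card ≤ S.card := Finset.card_le_card hTsub
  have h1 : (T a).card ≤ hammingNorm b2 := by
    rw [← hScard] at hLLL
    omega
  calc hammingNorm b = S.card := hScard.symm
    _ ≤ Fintype.card F * (T a).card := hSq
    _ ≤ Fintype.card F * hammingNorm b2 := Nat.mul_le_mul_left _ h1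
lemma sum_epipodal_le (B : Fin k → Fin n → F) :
    ∑ i : Fin k, hammingNorm (projRow B i i) ≤ n := by
  classical
  set supp : Fin k → Finset (Fin n) :=
    fun i => Finset.univ.filter (fun j => projRow B i i j ≠ 0) with hsupp_def
  have hval : ∀ i j, projRow B i i j ≠ 0 → B i j ≠ 0 := by
    intro i j h
    unfold projRow at h
    by_cases hc : ∃ t, t < i ∧ B t j ≠ 0
    · simp [hc] at h
    · simpa [hc] using h
  have hdisj : ∀ i m : Fin k, i ≠ m → Disjoint (supp i) (supp m) := by
    have key : ∀ i m : Fin k, i < m → Disjoint (supp i) (supp m) := by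
      intro i m him
      rw [Finset.disjoint_left]
      intro j hj hj2
      rw [hsupp_def, Finset.mem_filter] at hj hj2
      apply hj2.2
      unfold projRow
      rw [if_pos ⟨i, him, hval i j hj.2⟩]
    intro i m him
    rcases lt_or_gt_of_ne him with h | h
    · exact key i m h
    · exact (key m i h).symm
  have hcard : ∀ i, hammingNorm (projRow B i i) = (supp i).card := fun i => rfl
  calc ∑ i : Fin k, hammingNorm (projRow B i i)
      = ∑ i : Fin k, (supp i).card := by simp [hcard]
    _ = (Finset.univ.biUnion supp).card := by
        rw [Finset.card_biUnion (fun i _ m _ h => hdisj i m h)]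
    _ ≤ (Finset.univ : Finset (Fin n)).card := Finset.card_le_card (Finset.subset_univ _)
    _ = n := by simp

end

/-- An LLL-reduced basis meets the Griesmer bound:
`n ≥ Σ_{i=0}^{k−1} ⌈|b_1| / q^i⌉`. -/
theorem lll_griesmer {F : Type} [Field F] [Fintype F] [DecidableEq F]
    {k n q : ℕ} (hq : Fintype.card F = q) (hk : 0 < k)
    (B : Fin k → Fin n → F) (hB : IsLLLReduced B) :
    ∑ i ∈ Finset.range k, ⌈(hammingNorm (B ⟨0, hk⟩) : ℚ) / (q : ℚ) ^ i⌉₊ ≤ n := by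
  classical
  have hq0 : 0 < q := hq ▸ Fintype.card_pos
  set w0 := hammingNorm (B ⟨0, hk⟩) with hw0
  have hzero : projRow B ⟨0, hk⟩ ⟨0, hk⟩ = B ⟨0, hk⟩ := by
    funext j
    unfold projRow
    rw [if_neg]
    rintro ⟨t, ht, -⟩
    exact Nat.not_lt_zero _ (Fin.lt_def.mp ht)
  have key : ∀ i (hi : i < k), w0 ≤ q ^ i * hammingNorm (projRow B ⟨i, hi⟩ ⟨i, hi⟩) := by
    intro i
    induction i with
    | zero =>
      intro hi
      rw [pow_zero, one_mul]
      have : (⟨0, hi⟩ : Fin k) = ⟨0, hk⟩ := rfl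
      rw [this, hzero]
    | succ m ih =>
      intro hi
      have hm : m < k := Nat.lt_of_succ_lt hi
      have hstep := step B hB ⟨m, hm⟩ (by simpa using hi)
      rw [hq] at hstep
      calc w0 ≤ q ^ m * hammingNorm (projRow B ⟨m, hm⟩ ⟨m, hm⟩) := ih hm
        _ ≤ q ^ m * (q * hammingNorm (projRow B ⟨m+1, hi⟩ ⟨m+1, hi⟩)) :=
            Nat.mul_le_mul_left _ hstep
        _ = q ^ (m+1) * hammingNorm (projRow B ⟨m+1, hi⟩ ⟨m+1, hi⟩) := by ring
  have hterm : ∀ i (hi : i < k),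
      ⌈(w0 : ℚ) / (q : ℚ) ^ i⌉₊ ≤ hammingNorm (projRow B ⟨i, hi⟩ ⟨i, hi⟩) := by
    intro i hi
    rw [Nat.ceil_le, div_le_iff₀ (by positivity)]
    have := key i hi
    rw [mul_comm] at this
    exact_mod_cast this
  set g : ℕ → ℕ := fun i => if h : i < k then hammingNorm (projRow B ⟨i, h⟩ ⟨i, h⟩) else 0
    with hg
  calc ∑ i ∈ Finset.range k, ⌈(w0 : ℚ) / (q : ℚ) ^ i⌉₊
      ≤ ∑ i ∈ Finset.range k, g i := by
        apply Finset.sum_le_sum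
        intro i hi
        rw [Finset.mem_range] at hi
        rw [hg]
        simpa [hi] using hterm i hi
    _ = ∑ i : Fin k, hammingNorm (projRow B i i) := by
        rw [← Fin.sum_univ_eq_sum_range]
        apply Finset.sum_congr rfl
        intro i _
        simp [hg, i.isLt]
    _ ≤ n := sum_epipodal_le B
end

section
/- If B = (b_1; ...; b_{β+1}) ∈ F_q^{(β+1)×n} is twin reduced, then |b_{β+1}^+| ≥ ⌈ (q−1)/(q^β − q) · (s_q(|b_1|, β) − |b_1|) ⌉. -/
open Finset

section NrmLemmas
variable {F : Type} [Field F] {β : ℕ}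

/-- Normalization of a vector: scale so that the first nonzero coordinate is 1. -/
noncomputable def nrm (v : Fin β → F) : Fin β → F := by
  classical
  exact if h : (univ.filter (fun i => v i ≠ 0)).Nonempty
    then (v ((univ.filter (fun i => v i ≠ 0)).min' h))⁻¹ • v
    else v

lemma exists_smul_nrm {v : Fin β → F} (hv : v ≠ 0) :
    ∃ a : F, a ≠ 0 ∧ v = a • nrm v := by
  classical
  have hne : (univ.filter (fun i => v i ≠ 0)).Nonempty := by
    obtain ⟨i, hi⟩ := Function.ne_iff.mp hv
    exact ⟨i, by simpa using hi⟩
  set p := (univ.filter (fun i => v i ≠ 0)).min' hne with hp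
  have hvp : v p ≠ 0 := by
    have := (univ.filter (fun i => v i ≠ 0)).min'_mem hne
    simpa using this
  refine ⟨v p, hvp, ?_⟩
  unfold nrm
  rw [dif_pos hne, smul_smul, mul_inv_cancel₀ hvp, one_smul]

lemma smul_nrm_inj {u u' : Fin β → F} (hu : u ≠ 0) (hu' : u' ≠ 0)
    {a a' : F} (ha : a ≠ 0) (ha' : a' ≠ 0)
    (h : a • nrm u = a' • nrm u') : a = a' ∧ nrm u = nrm u' := by
  classical
  -- key evaluation lemma
  have key : ∀ (v : Fin β → F) (hv : v ≠ 0) (b : F), b ≠ 0 →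
      (univ.filter (fun i => (b • nrm v) i ≠ 0)) = (univ.filter (fun i => v i ≠ 0)) ∧
      (b • nrm v) ((univ.filter (fun i => v i ≠ 0)).min'
        (by obtain ⟨i, hi⟩ := Function.ne_iff.mp hv; exact ⟨i, by simpa using hi⟩)) = b := by
    intro v hv b hb
    have hne : (univ.filter (fun i => v i ≠ 0)).Nonempty := by
      obtain ⟨i, hi⟩ := Function.ne_iff.mp hv; exact ⟨i, by simpa using hi⟩
    set p := (univ.filter (fun i => v i ≠ 0)).min' hne with hp
    have hvp : v p ≠ 0 := by
      have := (univ.filter (fun i => v i ≠ 0)).min'_mem hne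
      simpa [← hp] using this
    have hnrm : nrm v = (v p)⁻¹ • v := by
      unfold nrm; rw [dif_pos hne]
    constructor
    · ext i
      simp only [mem_filter, mem_univ, true_and, hnrm, Pi.smul_apply, smul_eq_mul]
      constructor
      · intro hne0
        intro h0
        exact hne0 (by rw [h0]; ring)
      · intro hne0 h0
        have : b * ((v p)⁻¹ * v i) ≠ 0 := by
          exact mul_ne_zero hb (mul_ne_zero (inv_ne_zero hvp) hne0)
        exact this h0
    · simp [hnrm, smul_smul, inv_mul_cancel₀ hvp]
  obtain ⟨hsupp, heval⟩ := key u hu a ha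
  obtain ⟨hsupp', heval'⟩ := key u' hu' a' ha'
  have hne : (univ.filter (fun i => u i ≠ 0)).Nonempty := by
    obtain ⟨i, hi⟩ := Function.ne_iff.mp hu; exact ⟨i, by simpa using hi⟩
  have hsupps : (univ.filter (fun i => u i ≠ 0)) = (univ.filter (fun i => u' i ≠ 0)) := by
    rw [← hsupp, ← hsupp', h]
  have hmin : ∀ (A B : Finset (Fin β)) (hA : A.Nonempty) (hB : B.Nonempty), A = B →
      A.min' hA = B.min' hB := by rintro A B hA hB rfl; rfl
  have haa : a = a' := by
    rw [← heval, ← heval', h]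
    exact congrArg _ (hmin _ _ hne (hsupps ▸ hne) hsupps)
  refine ⟨haa, ?_⟩
  rw [haa] at h
  exact smul_right_injective _ ha' h

end NrmLemmas


/-- The repetition number `η(C)`: the maximal size of a redundant set for `C`. -/
noncomputable def eta {F : Type} [Field F] {n : ℕ} (C : Submodule F (Fin n → F)) : ℕ :=
  sSup {m | ∃ S : Finset (Fin n), Redundant C ↑S ∧ S.card = m}

/-- `minLen F d k` is `s_q(d, k)`: the minimal length `n` such that there exists a linear
code over `F` of length `n`, dimension `k`, and minimum Hamming distance at least `d`. -/
noncomputable def minLen (F : Type) [Field F] [Fintype F] [DecidableEq F] (d k : ℕ) : ℕ :=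
  sInf {n | ∃ C : Submodule F (Fin n → F), Module.finrank F C = k ∧
    ∀ c ∈ C, c ≠ 0 → d ≤ hammingNorm c}

set_option maxHeartbeats 1000000 in
/-- If `B = (b_1; …; b_{β+1})` is twin reduced (proper, `B_{[1,β]}` forward reduced,
`B_{[2,β+1]}` backward reduced), then
`|b_{β+1}^+| ≥ ⌈(q−1)/(q^β − q) · (s_q(|b_1|, β) − |b_1|)⌉`. -/
theorem twin_reduced_last_epipodal {F : Type} [Field F] [Fintype F] [DecidableEq F]
    {n q β : ℕ} (hq : Fintype.card F = q) (hβ : 2 ≤ β)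
    (B : Fin (β + 1) → Fin n → F)
    (hproper : ∀ i, projRow B i i ≠ 0)
    (hfwd : ∀ c ∈ Submodule.span F {v | ∃ m : Fin (β + 1), (m : ℕ) < β ∧ v = B m},
      c ≠ 0 → hammingNorm (B 0) ≤ hammingNorm c)
    (hbwd : hammingNorm (projRow B (Fin.last β) (Fin.last β)) =
      eta (Submodule.span F {v | ∃ m : Fin (β + 1), 0 < m ∧ v = projRow B 1 m})) :
    ⌈(((q : ℚ) - 1) / ((q : ℚ) ^ β - q)) *
        ((minLen F (hammingNorm (B 0)) β : ℚ) - (hammingNorm (B 0) : ℚ))⌉₊ ≤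
      hammingNorm (projRow B (Fin.last β) (Fin.last β)) := by
  classical
  have hq2 : 2 ≤ q := hq ▸ Fintype.one_lt_card
  rw [hbwd]
  set d := hammingNorm (B 0) with hd
  set s := minLen F d β with hs
  set m := ⌈(((q : ℚ) - 1) / ((q : ℚ) ^ β - q)) * ((s : ℚ) - (d : ℚ))⌉₊ with hm
  -- generating families
  set bfam : Fin β → Fin n → F := fun i => B i.castSucc with hbfam
  set g : Fin β → Fin n → F := fun i => projRow B 1 i.succ with hg
  have hset0 : {v | ∃ m : Fin (β + 1), (m : ℕ) < β ∧ v = B m} = Set.range bfam := by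
    ext v
    constructor
    · rintro ⟨m, hmlt, rfl⟩
      exact ⟨⟨(m : ℕ), hmlt⟩, by simp [hbfam]⟩
    · rintro ⟨i, rfl⟩
      exact ⟨i.castSucc, by simp [hbfam], rfl⟩
  have hset1 : {v | ∃ m : Fin (β + 1), 0 < m ∧ v = projRow B 1 m} = Set.range g := by
    ext v
    constructor
    · rintro ⟨m, hmpos, rfl⟩
      have hm0 : 0 < (m : ℕ) := hmpos
      have hmlt : (m : ℕ) - 1 < β := by omega
      refine ⟨⟨(m : ℕ) - 1, hmlt⟩, ?_⟩
      simp only [hg]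
      have hms : (⟨(m : ℕ) - 1, hmlt⟩ : Fin β).succ = m := by
        apply Fin.ext
        simp only [Fin.val_succ]
        omega
      rw [hms]
    · rintro ⟨i, rfl⟩
      exact ⟨i.succ, i.succ_pos, rfl⟩
  set C0 : Submodule F (Fin n → F) := Submodule.span F (Set.range bfam) with hC0
  set C' : Submodule F (Fin n → F) := Submodule.span F (Set.range g) with hC'
  rw [hset1]
  rw [hset0] at hfwd
  -- linear independence of bfam
  have hli : LinearIndependent F bfam := by
    rw [Fintype.linearIndependent_iff]
    intro lam hsum
    by_contra hex
    push_neg at hex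
    obtain ⟨i0, hi0⟩ := hex
    have hne : (univ.filter (fun i => lam i ≠ 0)).Nonempty := ⟨i0, by simp [hi0]⟩
    set t := (univ.filter (fun i => lam i ≠ 0)).max' hne with ht
    have hlt : lam t ≠ 0 := by
      have := (univ.filter (fun i => lam i ≠ 0)).max'_mem hne
      simpa [← ht] using this
    apply hproper t.castSucc
    unfold projRow
    funext j
    simp only [Pi.zero_apply]
    by_cases hc : ∃ u, u < t.castSucc ∧ B u j ≠ 0
    · rw [if_pos hc]
    · rw [if_neg hc]
      push_neg at hc
      have hj : (∑ i, lam i • bfam i) j = 0 := by rw [hsum]; rfl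
      rw [Finset.sum_apply] at hj
      have hsingle : ∑ i, (lam i • bfam i) j = lam t * B t.castSucc j := by
        rw [← Finset.sum_subset (subset_univ (univ.filter (fun i => lam i ≠ 0)))]
        · rw [Finset.sum_eq_single_of_mem t (by simp [hlt])]
          · simp [hbfam]
          · intro i hi hit
            have hile : i ≤ t := Finset.le_max' _ _ hi
            have hilt : i < t := lt_of_le_of_ne hile hit
            have : B i.castSucc j = 0 := hc i.castSucc (by simpa using hilt)
            simp [hbfam, this]
        · intro i _ hi
          simp only [mem_filter, mem_univ, true_and, not_not] at hi
          simp [hi]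
      rw [hsingle] at hj
      exact (mul_eq_zero.mp hj).resolve_left hlt
  -- support sets
  set suppb : Finset (Fin n) := univ.filter (fun j => B 0 j ≠ 0) with hsuppb
  set T : Finset (Fin n) :=
    univ.filter (fun j => B 0 j = 0 ∧ ∃ i : Fin β, (i : ℕ) + 1 < β ∧ B i.succ j ≠ 0) with hT
  set U : Finset (Fin n) := suppb ∪ T with hU
  have hvanish : ∀ c ∈ C0, ∀ j ∉ U, c j = 0 := by
    intro c hc j hj
    have hgen : ∀ i : Fin β, bfam i j = 0 := by
      intro i
      by_contra hne
      apply hj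
      by_cases h0 : B 0 j = 0
      · refine mem_union_right _ (mem_filter.mpr ⟨mem_univ _, h0, ?_⟩)
        have hi0 : (i : ℕ) ≠ 0 := by
          intro hii
          apply hne
          have : i.castSucc = (0 : Fin (β + 1)) := Fin.ext (by simp [hii])
          simp [hbfam, this, h0]
        refine ⟨⟨(i : ℕ) - 1, by omega⟩, by simp; omega, ?_⟩
        have : (⟨(i : ℕ) - 1, by omega⟩ : Fin β).succ = i.castSucc :=
          Fin.ext (by simp [Fin.val_succ]; omega)
        rw [this]
        exact hne
      · exact mem_union_left _ (mem_filter.mpr ⟨mem_univ _, h0⟩)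
    have hle : C0 ≤ LinearMap.ker (LinearMap.proj (R := F) (φ := fun _ : Fin n => F) j) := by
      rw [hC0, Submodule.span_le]
      rintro v ⟨i, rfl⟩
      exact hgen i
    exact hle hc
  -- the punctured code
  set e : {x // x ∈ U} ≃ Fin U.card := U.equivFin with he
  set φ : (Fin n → F) →ₗ[F] (Fin U.card → F) :=
    LinearMap.funLeft F F (fun k => (e.symm k : Fin n)) with hφ
  have hφapp : ∀ (v : Fin n → F) (k : Fin U.card), φ v k = v (e.symm k : Fin n) := by
    intro v k; rfl
  have hφinj : ∀ c ∈ C0, φ c = 0 → c = 0 := by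
    intro c hc hker
    funext j
    by_cases hj : j ∈ U
    · have := congrFun hker (e ⟨j, hj⟩)
      rw [hφapp] at this
      simpa using this
    · exact hvanish c hc j hj
  have hnorm_eq : ∀ c ∈ C0, hammingNorm (φ c) = hammingNorm c := by
    intro c hc
    show (univ.filter (fun k => φ c k ≠ 0)).card = (univ.filter (fun j => c j ≠ 0)).card
    apply Finset.card_bij (fun k _ => (e.symm k : Fin n))
    · intro k hk
      simp only [mem_filter, mem_univ, true_and] at hk ⊢
      rw [hφapp] at hk
      exact hk
    · intro k1 h1 k2 h2 hkk
      have : e.symm k1 = e.symm k2 := Subtype.ext hkk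
      exact e.symm.injective this
    · intro j hj
      simp only [mem_filter, mem_univ, true_and] at hj
      have hjU : j ∈ U := by
        by_contra hjn
        exact hj (hvanish c hc j hjn)
      refine ⟨e ⟨j, hjU⟩, ?_, by simp⟩
      simp only [mem_filter, mem_univ, true_and]
      rw [hφapp]
      simp [hj]
  -- s ≤ U.card
  have hsle : s ≤ U.card := by
    apply Nat.sInf_le
    refine ⟨Submodule.map φ C0, ?_, ?_⟩
    · have hmap : Submodule.map φ C0 = Submodule.span F (Set.range (φ ∘ bfam)) := by
        rw [hC0, Submodule.map_span, Set.range_comp]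
      rw [hmap]
      have hliφ : LinearIndependent F (φ ∘ bfam) := by
        apply hli.map
        rw [Submodule.disjoint_def]
        intro c hc hker
        rw [← hC0] at hc
        exact hφinj c hc (LinearMap.mem_ker.mp hker)
      rw [finrank_span_eq_card hliφ]
      simp
    · rintro c' ⟨c, hc, rfl⟩ hne
      have hcne : c ≠ 0 := by
        intro h0; apply hne; rw [h0]; simp
      have := hfwd c hc hcne
      rw [hnorm_eq c hc]
      exact this
  have hUcard : U.card ≤ d + T.card := by
    calc U.card ≤ suppb.card + T.card := card_union_le _ _
    _ = d + T.card := by rw [hd]; rfl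
  -- value vectors
  set w : Fin n → Fin β → F := fun j i => g i j with hw
  have hTw : ∀ j ∈ T, (∀ i : Fin β, w j i = B i.succ j) ∧
      (∃ i : Fin β, (i : ℕ) + 1 < β ∧ w j i ≠ 0) := by
    intro j hj
    rw [hT, mem_filter] at hj
    obtain ⟨-, h0, i, hi, hne⟩ := hj
    have hwji : ∀ i' : Fin β, w j i' = B i'.succ j := by
      intro i'
      show projRow B 1 i'.succ j = B i'.succ j
      unfold projRow
      rw [if_neg]
      push_neg
      intro u hu
      have h1v : ((1 : Fin (β + 1)) : ℕ) = 1 := by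
        rw [Fin.val_one']
        exact Nat.mod_eq_of_lt (by omega)
      have hu0 : u = 0 := by
        apply Fin.ext
        have hu' : (u : ℕ) < ((1 : Fin (β + 1)) : ℕ) := hu
        rw [h1v] at hu'
        simp only [Fin.val_zero]
        omega
      rw [hu0]
      exact h0
    exact ⟨hwji, ⟨i, hi, by rw [hwji i]; exact hne⟩⟩
  have hwne : ∀ j ∈ T, w j ≠ 0 := by
    intro j hj h0
    obtain ⟨-, i, -, hne⟩ := hTw j hj
    rw [h0] at hne
    exact hne rfl
  set f : Fin n → Fin β → F := fun j => nrm (w j) with hf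
  set tset : Finset (Fin β → F) := T.image f with htset
  -- counting
  have hcount : (q - 1) * tset.card ≤ q ^ β - q := by
    set Z : Finset (Fin β → F) :=
      univ.filter (fun u => ¬ ∃ i : Fin β, (i : ℕ) + 1 < β ∧ u i ≠ 0) with hZdef
    set Good : Finset (Fin β → F) :=
      univ.filter (fun u => ∃ i : Fin β, (i : ℕ) + 1 < β ∧ u i ≠ 0) with hGood
    have hZ : q ≤ Z.card := by
      have hinj : Set.InjOn (fun a : F => (fun i : Fin β => if (i : ℕ) + 1 = β then a else 0))
          ↑(univ : Finset F) := by
        intro a _ a' _ hfa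
        have := congrFun hfa ⟨β - 1, by omega⟩
        simpa [show β - 1 + 1 = β by omega] using this
      have hmaps : ∀ a ∈ (univ : Finset F),
          (fun i : Fin β => if (i : ℕ) + 1 = β then a else 0) ∈ Z := by
        intro a _
        rw [hZdef, mem_filter]
        refine ⟨mem_univ _, ?_⟩
        rintro ⟨i, hi, hne⟩
        exact hne (if_neg (by omega))
      have := Finset.card_le_card_of_injOn _ hmaps hinj
      rwa [Finset.card_univ, hq] at this
    have hGZ : Good.card + Z.card = q ^ β := by
      rw [hGood, hZdef, Finset.card_filter_add_card_filter_not, Finset.card_univ]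
      rw [Fintype.card_fun, hq, Fintype.card_fin]
    have hGoodle : Good.card ≤ q ^ β - q := by omega
    -- injection
    have hΦ : ∀ (a : F), a ≠ 0 → ∀ v ∈ tset, a • v ∈ Good := by
      intro a ha v hv
      rw [htset, Finset.mem_image] at hv
      obtain ⟨j, hjT, rfl⟩ := hv
      obtain ⟨b, hb, hbe⟩ := exists_smul_nrm (hwne j hjT)
      obtain ⟨-, i, hi, hne⟩ := hTw j hjT
      rw [hGood, mem_filter]
      refine ⟨mem_univ _, i, hi, ?_⟩
      have hnwi : nrm (w j) i ≠ 0 := by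
        intro h0
        apply hne
        rw [congrFun hbe i]
        simp [h0]
      simpa using mul_ne_zero ha hnwi
    have hinjΦ : Function.Injective
        (fun p : {a : F // a ≠ 0} × {v // v ∈ tset} =>
          (⟨p.1.1 • p.2.1, hΦ p.1.1 p.1.2 p.2.1 p.2.2⟩ : {u // u ∈ Good})) := by
      rintro ⟨⟨a, ha⟩, ⟨v, hv⟩⟩ ⟨⟨a', ha'⟩, ⟨v', hv'⟩⟩ hpe
      have heq : a • v = a' • v' := congrArg Subtype.val hpe
      rw [htset, Finset.mem_image] at hv hv'
      obtain ⟨j, hjT, rfl⟩ := hv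
      obtain ⟨j', hjT', rfl⟩ := hv'
      obtain ⟨haa, hvv⟩ := smul_nrm_inj (hwne j hjT) (hwne j' hjT') ha ha' heq
      simp only [Prod.mk.injEq, Subtype.mk.injEq]
      exact ⟨haa, hvv⟩
    have hcards := Fintype.card_le_of_injective _ hinjΦ
    rw [Fintype.card_prod, Fintype.card_coe, Fintype.card_coe] at hcards
    have hcard1 : Fintype.card {a : F // a ≠ 0} = q - 1 := by
      have h1 : Fintype.card {a : F // a = 0} = 1 := Fintype.card_subtype_eq (0 : F)
      have := Fintype.card_subtype_compl (fun a : F => a = 0)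
      rw [h1, hq] at this
      exact this
    rw [hcard1] at hcards
    exact le_trans hcards hGoodle
  -- trivial case
  rcases Nat.eq_zero_or_pos m with hm0 | hmpos
  · rw [hm0]
    exact Nat.zero_le _
  -- pigeonhole bound
  have hkey : tset.card * (m - 1) < T.card := by
    have hq1 : (1 : ℚ) < (q : ℚ) := by exact_mod_cast hq2
    have hpow : (q : ℚ) < (q : ℚ) ^ β := by
      calc (q : ℚ) = (q : ℚ) ^ 1 := (pow_one _).symm
      _ < (q : ℚ) ^ β := pow_lt_pow_right₀ hq1 (by omega)
    have hden : (0 : ℚ) < (q : ℚ) ^ β - q := by linarith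
    have hq1' : (0 : ℚ) < (q : ℚ) - 1 := by linarith
    have h1 : ((m : ℚ) - 1) < ((q : ℚ) - 1) / ((q : ℚ) ^ β - q) * ((s : ℚ) - d) := by
      have hlt : (m - 1 : ℕ) < ⌈((q : ℚ) - 1) / ((q : ℚ) ^ β - q) * ((s : ℚ) - d)⌉₊ := by
        rw [← hm]; omega
      have := Nat.lt_ceil.mp hlt
      rwa [Nat.cast_sub hmpos, Nat.cast_one] at this
    have h2 : (s : ℚ) - d ≤ (T.card : ℚ) := by
      have : s ≤ d + T.card := le_trans hsle hUcard
      have := (Nat.cast_le (α := ℚ)).mpr this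
      push_cast at this
      linarith
    have h3 : ((m : ℚ) - 1) < ((q : ℚ) - 1) / ((q : ℚ) ^ β - q) * (T.card : ℚ) :=
      lt_of_lt_of_le h1 (mul_le_mul_of_nonneg_left h2 (le_of_lt (div_pos hq1' hden)))
    have h4 : (tset.card : ℚ) ≤ ((q : ℚ) ^ β - q) / ((q : ℚ) - 1) := by
      rw [le_div_iff₀ hq1']
      have := (Nat.cast_le (α := ℚ)).mpr hcount
      rw [Nat.cast_mul, Nat.cast_sub (by omega : 1 ≤ q),
        Nat.cast_sub (Nat.le_self_pow (by omega) q), Nat.cast_pow, Nat.cast_one] at this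
      linarith
    have h5 : (tset.card : ℚ) * ((m : ℚ) - 1) < (T.card : ℚ) := by
      have hmm : (0 : ℚ) ≤ (m : ℚ) - 1 := by
        have : (1 : ℚ) ≤ (m : ℚ) := by exact_mod_cast hmpos
        linarith
      calc (tset.card : ℚ) * ((m : ℚ) - 1)
          ≤ ((q : ℚ) ^ β - q) / ((q : ℚ) - 1) * ((m : ℚ) - 1) :=
            mul_le_mul_of_nonneg_right h4 hmm
        _ < ((q : ℚ) ^ β - q) / ((q : ℚ) - 1) *
            (((q : ℚ) - 1) / ((q : ℚ) ^ β - q) * (T.card : ℚ)) :=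
            mul_lt_mul_of_pos_left h3 (div_pos hden hq1')
        _ = (T.card : ℚ) := by
            field_simp
    have : ((tset.card * (m - 1) : ℕ) : ℚ) < ((T.card : ℕ) : ℚ) := by
      rw [Nat.cast_mul, Nat.cast_sub hmpos, Nat.cast_one]
      exact h5
    exact_mod_cast this
  obtain ⟨w0, hw0t, hfib⟩ := Finset.exists_lt_card_fiber_of_mul_lt_card_of_maps_to
    (fun j hj => Finset.mem_image_of_mem f hj) hkey
  set S : Finset (Fin n) := T.filter (fun j => f j = w0) with hS
  have hmS : m ≤ S.card := by omega
  -- redundancy of S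
  have hred : Redundant (Submodule.span F (Set.range g)) ↑S := by
    constructor
    · intro j hj
      have hjS : j ∈ S := hj
      have hjT : j ∈ T := (mem_filter.mp hjS).1
      obtain ⟨-, i, -, hne⟩ := hTw j hjT
      exact ⟨g i, Submodule.subset_span (Set.mem_range_self i), hne⟩
    · intro c hc j hj j' hj'
      have hjS : j ∈ S := hj
      have hjS' : j' ∈ S := hj'
      have hjT : j ∈ T := (mem_filter.mp hjS).1
      have hjT' : j' ∈ T := (mem_filter.mp hjS').1
      have hfj : nrm (w j) = w0 := (mem_filter.mp hjS).2
      have hfj' : nrm (w j') = w0 := (mem_filter.mp hjS').2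
      obtain ⟨lam, hlam⟩ := (Submodule.mem_span_range_iff_exists_fun F).mp hc
      obtain ⟨a, ha, hae⟩ := exists_smul_nrm (hwne j hjT)
      obtain ⟨a', ha', hae'⟩ := exists_smul_nrm (hwne j' hjT')
      rw [hfj] at hae
      rw [hfj'] at hae'
      have hcj : ∀ (jj : Fin n) (aa : F), w jj = aa • w0 →
          c jj = aa * ∑ i, lam i * w0 i := by
        intro jj aa haej
        rw [← hlam, Finset.sum_apply, Finset.mul_sum]
        apply Finset.sum_congr rfl
        intro i _
        have hgw : g i jj = aa * w0 i := by
          have := congrFun haej i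
          simpa using this
        simp only [Pi.smul_apply, smul_eq_mul, hgw]
        ring
      rw [hcj j a hae, hcj j' a' hae']
      simp [mul_eq_zero, ha, ha']
  -- conclude via eta
  have hSeta : S.card ≤ eta (Submodule.span F (Set.range g)) := by
    apply le_csSup
    · refine ⟨n, ?_⟩
      rintro x ⟨S', -, rfl⟩
      calc S'.card ≤ Fintype.card (Fin n) := Finset.card_le_univ _
      _ = n := Fintype.card_fin n
    · exact ⟨S, hred, rfl⟩
  exact le_trans hmS hSeta
end

section
/- For positive integers n and k ≥ 2 with k ≤ n ≤ k^5 − 1, a uniformly random matrix B in F_2^{k×n} generates a code with minimum distance d_min(C(B)) > (n−k)/(10·log₂ k) with probability at least 1 − 2^{−(n−k)/2}. -/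
open Finset

/-- Sum of binomials bound. -/
lemma sum_choose_le (n D : ℕ) : ∑ i ∈ range (D + 1), n.choose i ≤ (n + 1) ^ D := by
  induction D with
  | zero => simp
  | succ D ih =>
      rw [Finset.sum_range_succ]
      have h1 : n.choose (D + 1) ≤ n ^ (D + 1) := Nat.choose_le_pow _ _
      have h2 : n ^ (D + 1) ≤ (n + 1) ^ D * n := by
        rw [pow_succ]
        exact Nat.mul_le_mul_right _ (Nat.pow_le_pow_left (Nat.le_succ n) D)
      calc ∑ i ∈ range (D+1), n.choose i + n.choose (D+1)
          ≤ (n+1)^D + (n+1)^D * n := Nat.add_le_add ih (h1.trans h2)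
        _ = (n+1)^(D+1) := by ring

/-- Count of vectors of Hamming weight at most `D`. -/
lemma count_small_weight (n D : ℕ) :
    Fintype.card {v : Fin n → ZMod 2 // hammingNorm v ≤ D} ≤ (n + 1) ^ D := by
  classical
  have hinj : Function.Injective
      (fun v : {v : Fin n → ZMod 2 // hammingNorm v ≤ D} =>
        (⟨univ.filter (fun i => v.1 i ≠ 0), by
          simpa [hammingNorm] using v.2⟩ :
          {s : Finset (Fin n) // s.card ≤ D})) := by
    rintro ⟨v, hv⟩ ⟨w, hw⟩ h
    simp only [Subtype.mk.injEq] at h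
    refine Subtype.ext (funext fun i => ?_)
    have hmem := Finset.ext_iff.mp h i
    simp only [mem_filter, mem_univ, true_and] at hmem
    have hz : ∀ x y : ZMod 2, (x ≠ 0 ↔ y ≠ 0) → x = y := by decide
    exact hz _ _ hmem
  have h1 : Fintype.card {v : Fin n → ZMod 2 // hammingNorm v ≤ D}
      ≤ Fintype.card {s : Finset (Fin n) // s.card ≤ D} :=
    Fintype.card_le_of_injective _ hinj
  refine h1.trans ?_
  rw [Fintype.card_subtype]
  have hsub : (univ.filter fun s : Finset (Fin n) => s.card ≤ D)
      ⊆ (range (D+1)).biUnion (fun i => Finset.powersetCard i univ) := by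
    intro s hs
    simp only [mem_filter, mem_univ, true_and] at hs
    simp only [mem_biUnion, mem_range, Finset.mem_powersetCard]
    exact ⟨s.card, Nat.lt_succ_of_le hs, subset_univ s, rfl⟩
  calc (univ.filter fun s : Finset (Fin n) => s.card ≤ D).card
      ≤ ((range (D+1)).biUnion (fun i => Finset.powersetCard i univ)).card :=
        Finset.card_le_card hsub
    _ ≤ ∑ i ∈ range (D+1), (Finset.powersetCard i (univ : Finset (Fin n))).card :=
        Finset.card_biUnion_le
    _ = ∑ i ∈ range (D+1), n.choose i := by
        refine Finset.sum_congr rfl fun i _ => ?_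
        rw [Finset.card_powersetCard, Finset.card_univ, Fintype.card_fin]
    _ ≤ (n+1)^D := sum_choose_le n D

lemma card_matrix_z2 (k n : ℕ) :
    Fintype.card (Matrix (Fin k) (Fin n) (ZMod 2)) = 2 ^ (k * n) := by
  rw [Fintype.card_congr (Matrix.of (m := Fin k) (n := Fin n) (α := ZMod 2)).symm,
    Fintype.card_fun, Fintype.card_fun, ZMod.card, Fintype.card_fin, Fintype.card_fin,
    ← pow_mul, mul_comm n k]

/-- Fiber counting lemma: for nonzero `z` and any predicate `p`, the count of matrices
with `p (z ᵥ* B)` times `2^n` equals the count of vectors with `p v` times `2^(k*n)`. -/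
lemma fiber_count {k n : ℕ} (z : Fin k → ZMod 2) (hz : z ≠ 0)
    (p : (Fin n → ZMod 2) → Prop) [DecidablePred p] :
    Fintype.card {B : Matrix (Fin k) (Fin n) (ZMod 2) // p (Matrix.vecMul z B)} * 2 ^ n
      = Fintype.card {v : Fin n → ZMod 2 // p v} * 2 ^ (k * n) := by
  classical
  -- the linear map B ↦ z ᵥ* B
  set f : Matrix (Fin k) (Fin n) (ZMod 2) →ₗ[ZMod 2] (Fin n → ZMod 2) :=
    { toFun := fun B => Matrix.vecMul z B
      map_add' := fun A B => Matrix.vecMul_add A B z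
      map_smul' := fun c B => by
        ext j
        simp [Matrix.vecMul, dotProduct, Finset.mul_sum, mul_left_comm] } with hf
  have hz1 : ∀ x : ZMod 2, x ≠ 0 → x = 1 := by decide
  obtain ⟨i, hi⟩ : ∃ i, z i ≠ 0 := by
    by_contra h
    push_neg at h
    exact hz (funext fun i => h i)
  have hsurj : Function.Surjective f := by
    intro v
    refine ⟨Matrix.of (fun i' j => if i' = i then v j else 0), ?_⟩
    ext j
    simp only [hf, LinearMap.coe_mk, AddHom.coe_mk, Matrix.vecMul, dotProduct]
    rw [Finset.sum_eq_single i]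
    · simp [hz1 _ hi]
    · intro b _ hb; simp [Matrix.of_apply, hb]
    · simp
  obtain ⟨g, hg⟩ := f.exists_rightInverse_of_surjective (LinearMap.range_eq_top.mpr hsurj)
  have hgf : ∀ v, f (g v) = v := fun v => LinearMap.congr_fun hg v
  -- equivalence with product
  set e : Matrix (Fin k) (Fin n) (ZMod 2) ≃ (Fin n → ZMod 2) × (LinearMap.ker f) :=
    { toFun := fun B => (f B, ⟨B - g (f B), by
        simp [LinearMap.mem_ker, map_sub, hgf]⟩)
      invFun := fun q => g q.1 + q.2.1
      left_inv := fun B => by simp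
      right_inv := fun q => by
        have h1 : f (g q.1 + q.2.1) = q.1 := by
          rw [map_add, hgf, (LinearMap.mem_ker).mp q.2.2, add_zero]
        refine Prod.ext h1 (Subtype.ext ?_)
        simp [h1] } with he
  have hcards : Fintype.card {B : Matrix (Fin k) (Fin n) (ZMod 2) // p (Matrix.vecMul z B)}
      = Fintype.card {v : Fin n → ZMod 2 // p v} * Fintype.card (LinearMap.ker f) := by
    have e2 : {B : Matrix (Fin k) (Fin n) (ZMod 2) // p (Matrix.vecMul z B)}
        ≃ {q : (Fin n → ZMod 2) × (LinearMap.ker f) // p q.1} :=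
      e.subtypeEquiv (fun B => by rfl)
    rw [Fintype.card_congr e2, Fintype.card_congr (Equiv.prodSubtypeFstEquivSubtypeProd
      (p := p) (β := LinearMap.ker f)), Fintype.card_prod]
  have htot : 2 ^ (k * n) = 2 ^ n * Fintype.card (LinearMap.ker f) := by
    rw [← card_matrix_z2 k n, Fintype.card_congr e, Fintype.card_prod, Fintype.card_fun,
      ZMod.card, Fintype.card_fin]
  rw [hcards, htot]
  ring


set_option maxHeartbeats 2000000 in
/-- For `2 ≤ k ≤ n ≤ k^5 − 1`, a uniformly random matrix `B ∈ F_2^{k×n}` generates a code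
with minimum distance greater than `(n−k)/(10·log₂ k)` with probability at least
`1 − 2^{−(n−k)/2}`, stated here by counting matrices.  (The minimum distance condition is
expressed as: every nonzero row combination `zᵀB` has Hamming weight exceeding the bound,
which in particular forces `B` to have full row rank.) -/
theorem random_code_min_distance (n k : ℕ) (hk : 2 ≤ k) (hkn : k ≤ n)
    (hn : n ≤ k ^ 5 - 1) :
    (1 - (2 : ℝ) ^ (-(((n : ℝ) - (k : ℝ)) / 2))) * 2 ^ (k * n) ≤
      Nat.card {B : Matrix (Fin k) (Fin n) (ZMod 2) //
        ∀ z : Fin k → ZMod 2, z ≠ 0 →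
          ((n : ℝ) - (k : ℝ)) / (10 * Real.logb 2 k) <
            (hammingNorm (Matrix.vecMul z B) : ℝ)} := by
  classical
  set L := Real.logb 2 k with hLdef
  have hk2 : (2 : ℝ) ≤ (k : ℝ) := by exact_mod_cast hk
  have hkpos : (0 : ℝ) < (k : ℝ) := by linarith
  have hL1 : 1 ≤ L := by
    have h2 : Real.logb 2 2 ≤ Real.logb 2 k :=
      (Real.logb_le_logb (by norm_num : (1:ℝ) < 2) (by norm_num) hkpos).mpr hk2
    rwa [Real.logb_self_eq_one (by norm_num)] at h2
  have hLpos : 0 < L := lt_of_lt_of_le one_pos hL1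
  set d : ℝ := ((n : ℝ) - (k : ℝ)) / (10 * L) with hddef
  have hd0 : 0 ≤ d := by
    apply div_nonneg
    · have : (k : ℝ) ≤ (n : ℝ) := by exact_mod_cast hkn
      linarith
    · positivity
  set D : ℕ := ⌊d⌋₊ with hDdef
  set P : Matrix (Fin k) (Fin n) (ZMod 2) → Prop :=
    fun B => ∀ z : Fin k → ZMod 2, z ≠ 0 → d < (hammingNorm (Matrix.vecMul z B) : ℝ)
    with hPdef
  rw [Nat.card_eq_fintype_card]
  set Good := Fintype.card {B : Matrix (Fin k) (Fin n) (ZMod 2) // P B} with hGood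
  set Bad := Fintype.card {B : Matrix (Fin k) (Fin n) (ZMod 2) // ¬ P B} with hBad
  have hsum : Good + Bad = 2 ^ (k * n) := by
    have h1 : Bad = Fintype.card (Matrix (Fin k) (Fin n) (ZMod 2)) - Good :=
      Fintype.card_subtype_compl P
    have h2 : Good ≤ Fintype.card (Matrix (Fin k) (Fin n) (ZMod 2)) :=
      Fintype.card_subtype_le _
    rw [card_matrix_z2] at h1 h2
    omega
  -- Union bound on the bad set
  set M := Fintype.card {v : Fin n → ZMod 2 // hammingNorm v ≤ D} with hM
  have hkeyNat : Bad * 2 ^ n ≤ 2 ^ k * (M * 2 ^ (k * n)) := by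
    have hsub : (Finset.univ.filter fun B : Matrix (Fin k) (Fin n) (ZMod 2) => ¬ P B)
        ⊆ (Finset.univ.filter fun z : Fin k → ZMod 2 => z ≠ 0).biUnion
          (fun z => Finset.univ.filter fun B : Matrix (Fin k) (Fin n) (ZMod 2) =>
            hammingNorm (Matrix.vecMul z B) ≤ D) := by
      intro B hB
      simp only [Finset.mem_filter, Finset.mem_univ, true_and, hPdef] at hB
      push_neg at hB
      obtain ⟨z, hz, hle⟩ := hB
      simp only [Finset.mem_biUnion, Finset.mem_filter, Finset.mem_univ, true_and]
      exact ⟨z, hz, (Nat.le_floor_iff hd0).mpr hle⟩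
    have h1 : Bad ≤ ∑ z ∈ Finset.univ.filter fun z : Fin k → ZMod 2 => z ≠ 0,
        Fintype.card {B : Matrix (Fin k) (Fin n) (ZMod 2) //
          hammingNorm (Matrix.vecMul z B) ≤ D} := by
      rw [hBad, Fintype.card_subtype]
      refine (Finset.card_le_card hsub).trans ?_
      refine Finset.card_biUnion_le.trans ?_
      exact Finset.sum_le_sum fun z _ => le_of_eq (Fintype.card_subtype _).symm
    calc Bad * 2 ^ n
        ≤ (∑ z ∈ Finset.univ.filter fun z : Fin k → ZMod 2 => z ≠ 0,
            Fintype.card {B : Matrix (Fin k) (Fin n) (ZMod 2) //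
              hammingNorm (Matrix.vecMul z B) ≤ D}) * 2 ^ n :=
          Nat.mul_le_mul_right _ h1
      _ = ∑ z ∈ Finset.univ.filter fun z : Fin k → ZMod 2 => z ≠ 0, M * 2 ^ (k * n) := by
          rw [Finset.sum_mul]
          refine Finset.sum_congr rfl fun z hz => ?_
          simp only [Finset.mem_filter, Finset.mem_univ, true_and] at hz
          exact fiber_count z hz (fun v => hammingNorm v ≤ D)
      _ ≤ 2 ^ k * (M * 2 ^ (k * n)) := by
          rw [Finset.sum_const, smul_eq_mul]
          apply Nat.mul_le_mul_right
          calc (Finset.univ.filter fun z : Fin k → ZMod 2 => z ≠ 0).card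
              ≤ Fintype.card (Fin k → ZMod 2) := by
                rw [← Finset.card_univ]; exact Finset.card_filter_le _ _
            _ = 2 ^ k := by rw [Fintype.card_fun, ZMod.card, Fintype.card_fin]
  have hMle : M ≤ (n + 1) ^ D := count_small_weight n D
  -- Real-valued key inequality
  have hrkey : ((n : ℝ) + 1) ^ D ≤ (2 : ℝ) ^ (((n : ℝ) - (k : ℝ)) / 2) := by
    have hk5 : (1:ℕ) ≤ k ^ 5 := Nat.one_le_pow _ _ (by omega)
    have hn1 : ((n : ℝ) + 1) ≤ (k : ℝ) ^ 5 := by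
      have : n + 1 ≤ k ^ 5 := by omega
      exact_mod_cast this
    have hbase : (1 : ℝ) ≤ (n : ℝ) + 1 := le_add_of_nonneg_left (by positivity)
    have hLne : L ≠ 0 := ne_of_gt hLpos
    calc ((n : ℝ) + 1) ^ D = ((n : ℝ) + 1) ^ (D : ℝ) := (Real.rpow_natCast _ D).symm
      _ ≤ ((n : ℝ) + 1) ^ d :=
          Real.rpow_le_rpow_of_exponent_le hbase (Nat.floor_le hd0)
      _ ≤ ((k : ℝ) ^ 5) ^ d := Real.rpow_le_rpow (by positivity) hn1 hd0
      _ = ((2 : ℝ) ^ Real.logb 2 ((k : ℝ) ^ 5)) ^ d := by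
          rw [Real.rpow_logb (by norm_num) (by norm_num) (by positivity)]
      _ = (2 : ℝ) ^ (Real.logb 2 ((k : ℝ) ^ 5) * d) :=
          (Real.rpow_mul (by norm_num) _ _).symm
      _ = (2 : ℝ) ^ (((n : ℝ) - (k : ℝ)) / 2) := by
          rw [Real.logb_pow]
          congr 1
          rw [hddef, hLdef]
          push_cast
          have hLne' : Real.logb 2 (k : ℝ) ≠ 0 := hLne
          field_simp
          ring
  -- combine in the reals
  set ε : ℝ := (2 : ℝ) ^ (-(((n : ℝ) - (k : ℝ)) / 2)) with hε
  have hBadR : (Bad : ℝ) ≤ ε * 2 ^ (k * n) := by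
    have hcast : (Bad : ℝ) * 2 ^ n ≤ 2 ^ k * (((n : ℝ) + 1) ^ D * 2 ^ (k * n)) := by
      have := hkeyNat.trans (Nat.mul_le_mul_left _ (Nat.mul_le_mul_right _ hMle))
      exact_mod_cast this
    have hεeq : (2 : ℝ) ^ k * (2 : ℝ) ^ (((n : ℝ) - (k : ℝ)) / 2) = ε * (2 : ℝ) ^ n := by
      rw [hε, ← Real.rpow_natCast 2 k, ← Real.rpow_natCast 2 n,
        ← Real.rpow_add (by norm_num : (0:ℝ) < 2), ← Real.rpow_add (by norm_num : (0:ℝ) < 2)]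
      congr 1
      ring
    have h2n : (0 : ℝ) < 2 ^ n := by positivity
    have hchain : (Bad : ℝ) * 2 ^ n ≤ ε * 2 ^ (k * n) * 2 ^ n := by
      calc (Bad : ℝ) * 2 ^ n ≤ 2 ^ k * (((n : ℝ) + 1) ^ D * 2 ^ (k * n)) := hcast
        _ ≤ 2 ^ k * ((2 : ℝ) ^ (((n : ℝ) - (k : ℝ)) / 2) * 2 ^ (k * n)) := by
            have h2kn : (0:ℝ) ≤ 2 ^ (k*n) := by positivity
            have h2k : (0:ℝ) ≤ 2 ^ k := by positivity
            exact mul_le_mul_of_nonneg_left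
              (mul_le_mul_of_nonneg_right hrkey h2kn) h2k
        _ = ε * 2 ^ (k * n) * 2 ^ n := by rw [← mul_assoc, hεeq]; ring
    exact le_of_mul_le_mul_right hchain h2n
  have hGcast : (Good : ℝ) + (Bad : ℝ) = 2 ^ (k * n) := by exact_mod_cast hsum
  linarith
end
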